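/- arXiv:1805.00575 — 2 statements merged into one kernel-verified Lean document; each statement's English description precedes it below -/
import Mathlib

section
/- For a virtual graph G with no coloops, the S-polynomial S_G(Q) is a monic polynomial in Q of degree exactly b_1(G) − g(G); in general, deg S_G(Q) ≤ b_1(G) − g(G). -/
open Polynomial

noncomputable section
open scoped Classical


section SAuxSec
open Equiv Equiv.Perm
namespace SAux

variable {α : Type*}

/-- number of orbits of a permutation -/
def orbs [Finite α] (σ : Perm α) : ℕ := Nat.card (Quotient (SameCycle.setoid σ))

lemma pow_fix {σ : Perm α} {x : α} {k : ℕ} (hk : (σ ^ k) x = x) (q : ℕ) :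
    ((σ ^ k) ^ q) x = x := by
  induction q with
  | zero => simp
  | succ m ih => rw [pow_succ, Equiv.Perm.mul_apply, hk, ih]

lemma pow_eq_pow_mod {σ : Perm α} {x : α} {k : ℕ} (hk : (σ ^ k) x = x) (n : ℕ) :
    (σ ^ n) x = (σ ^ (n % k)) x := by
  conv_lhs => rw [← Nat.div_add_mod n k, add_comm, pow_add, pow_mul]
  rw [Equiv.Perm.mul_apply, pow_fix hk]

/-- closure: if a setoid contains all σ-steps, it contains SameCycle σ -/
lemma sameCycle_subset [Finite α] {σ : Perm α} (s : Setoid α)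
    (hstep : ∀ x, s.r x (σ x)) {x y : α} (h : σ.SameCycle x y) : s.r x y := by
  have hn : ∀ (n : ℕ) (z : α), s.r z ((σ ^ n) z) := by
    intro n
    induction n with
    | zero => intro z; simpa using s.refl z
    | succ k ih =>
        intro z
        refine s.trans (ih z) ?_
        rw [pow_succ', Equiv.Perm.mul_apply]
        exact hstep _
  obtain ⟨i, hi, hxy⟩ := h.exists_pow_eq'
  rw [← hxy]; exact hn i x

/-- the setoid obtained by joining the classes of `a` and `b`. -/
def joinPair (s : Setoid α) (a b : α) : Setoid α where
  r x y := s.r x y ∨ (s.r x a ∧ s.r b y) ∨ (s.r x b ∧ s.r a y)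
  iseqv := by
    constructor
    · intro x; exact Or.inl (s.refl x)
    · intro x y h
      rcases h with h | ⟨h1, h2⟩ | ⟨h1, h2⟩
      · exact Or.inl (s.symm h)
      · exact Or.inr (Or.inr ⟨s.symm h2, s.symm h1⟩)
      · exact Or.inr (Or.inl ⟨s.symm h2, s.symm h1⟩)
    · intro x y z hxy hyz
      rcases hxy with h | ⟨h1, h2⟩ | ⟨h1, h2⟩ <;>
        rcases hyz with g | ⟨g1, g2⟩ | ⟨g1, g2⟩
      · exact Or.inl (s.trans h g)
      · exact Or.inr (Or.inl ⟨s.trans h g1, g2⟩)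
      · exact Or.inr (Or.inr ⟨s.trans h g1, g2⟩)
      · exact Or.inr (Or.inl ⟨h1, s.trans h2 g⟩)
      · exact Or.inl (s.trans h1 (s.trans (s.symm (s.trans h2 g1)) g2))
      · exact Or.inl (s.trans h1 g2)
      · exact Or.inr (Or.inr ⟨h1, s.trans h2 g⟩)
      · exact Or.inl (s.trans h1 g2)
      · exact Or.inl (s.trans h1 (s.trans (s.symm (s.trans h2 g1)) g2))

lemma card_ne_add_one {β : Type*} [Finite β] (b : β) :
    Nat.card {x : β // x ≠ b} + 1 = Nat.card β := by
  have : Fintype β := Fintype.ofFinite β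
  classical
  rw [Nat.card_eq_fintype_card, Nat.card_eq_fintype_card]
  have h1 : Fintype.card {x : β // ¬ x = b} = Fintype.card β - Fintype.card {x : β // x = b} :=
    Fintype.card_subtype_compl _
  have h2 : Fintype.card {x : β // x = b} = 1 := Fintype.card_subtype_eq b
  have h3 : 0 < Fintype.card β := Fintype.card_pos_iff.mpr ⟨b⟩
  have : Fintype.card {x : β // x ≠ b} = Fintype.card {x : β // ¬ x = b} := rfl
  omega

/-- canonical surjection to a coarser quotient -/
def coarsen {α : Type*} {s t : Setoid α} (h : ∀ x y, s.r x y → t.r x y) :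
    Quotient s → Quotient t :=
  Quotient.lift (fun x => Quotient.mk t x) (fun x y hxy => Quotient.sound (h x y hxy))

lemma card_joinPair_add_one [Finite α] (s : Setoid α) (a b : α) (hab : ¬ s.r a b) :
    Nat.card (Quotient (joinPair s a b)) + 1 = Nat.card (Quotient s) := by
  have hsub : ∀ x y, s.r x y → (joinPair s a b).r x y := fun x y h => Or.inl h
  set f : Quotient s → Quotient (joinPair s a b) := coarsen hsub with hf
  have key : Function.Bijective
      (fun c : {c : Quotient s // c ≠ Quotient.mk s b} => f c.1) := by
    constructor
    · rintro ⟨c1, hc1⟩ ⟨c2, hc2⟩ h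
      obtain ⟨x1, rfl⟩ := Quotient.exists_rep c1
      obtain ⟨x2, rfl⟩ := Quotient.exists_rep c2
      simp only [hf, coarsen, Quotient.lift_mk] at h
      have h' := Quotient.exact h
      rcases h' with h' | ⟨h1, h2⟩ | ⟨h1, h2⟩
      · exact Subtype.ext (Quotient.sound h')
      · exact absurd (Quotient.sound (s.symm h2) : Quotient.mk s x2 = Quotient.mk s b) hc2
      · exact absurd (Quotient.sound h1 : Quotient.mk s x1 = Quotient.mk s b) hc1
    · intro d
      obtain ⟨x, rfl⟩ := Quotient.exists_rep d
      by_cases hx : s.r x b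
      · refine ⟨⟨Quotient.mk s a, fun h => hab (Quotient.exact h)⟩, ?_⟩
        simp only [hf, coarsen, Quotient.lift_mk]
        exact Quotient.sound (Or.inr (Or.inl ⟨s.refl a, s.symm hx⟩))
      · exact ⟨⟨Quotient.mk s x, fun h => hx (Quotient.exact h)⟩, rfl⟩
  rw [← Nat.card_congr (Equiv.ofBijective _ key)]
  exact card_ne_add_one _

/-- classes with a representative satisfying `p` correspond to the quotient of the
subtype by the comapped setoid -/
lemma card_quot_subtype (s : Setoid α) (p : α → Prop) :
    Nat.card (Quotient (Setoid.comap (Subtype.val : {x // p x} → α) s))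
      = Nat.card {c : Quotient s // ∃ x, p x ∧ Quotient.mk s x = c} := by
  apply Nat.card_congr
  refine Equiv.ofBijective
    (Quotient.lift (fun x : {x // p x} => (⟨Quotient.mk s x.1, ⟨x.1, x.2, rfl⟩⟩ :
        {c : Quotient s // ∃ x, p x ∧ Quotient.mk s x = c}))
      (fun x y hxy => Subtype.ext (Quotient.sound hxy))) ⟨?_, ?_⟩
  · intro c1 c2 h
    obtain ⟨x1, rfl⟩ := Quotient.exists_rep c1
    obtain ⟨x2, rfl⟩ := Quotient.exists_rep c2
    simp only [Quotient.lift_mk, Subtype.mk.injEq] at h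
    exact Quotient.sound (Quotient.exact h : s.r x1.1 x2.1)
  · rintro ⟨c, x, hx, rfl⟩
    exact ⟨Quotient.mk _ (⟨x, hx⟩ : {x // p x}), Subtype.ext rfl⟩

lemma card_split {β : Type*} [Finite β] (p : β → Prop) :
    Nat.card β = Nat.card {x : β // p x} + Nat.card {x : β // ¬ p x} := by
  rw [← Nat.card_sum]
  exact Nat.card_congr (Equiv.sumCompl p).symm

set_option linter.unusedSectionVars false
variable [DecidableEq α]

lemma sc_step (σ : Equiv.Perm α) (x : α) : σ.SameCycle x (σ x) := ⟨1, by simp⟩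

lemma traj {σ : Equiv.Perm α} {a b : α} (k : ℕ)
    (hk : ∀ j, 0 < j → j < k → (σ ^ j) a ≠ a ∧ (σ ^ j) a ≠ b) :
    ∀ j, 0 < j → j ≤ k → ((σ * Equiv.swap a b) ^ j) b = (σ ^ j) a := by
  intro j
  induction j with
  | zero => intro h; omega
  | succ i ih =>
      intro _ hik
      rcases Nat.eq_zero_or_pos i with rfl | hi
      · simp [Equiv.Perm.mul_apply]
      · have hii := ih hi (by omega)
        have hne := hk i hi (by omega)
        rw [pow_succ', pow_succ', Equiv.Perm.mul_apply, Equiv.Perm.mul_apply, hii,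
          Equiv.Perm.mul_apply, Equiv.swap_apply_of_ne_of_ne hne.1 hne.2]

lemma pow_fix' {σ : Equiv.Perm α} {x : α} {k : ℕ} (hk : (σ ^ k) x = x) (q : ℕ) :
    ((σ ^ k) ^ q) x = x := by
  induction q with
  | zero => simp
  | succ m ih => rw [pow_succ, Equiv.Perm.mul_apply, hk, ih]

lemma perm_pow_eq_pow_mod {σ : Equiv.Perm α} {x : α} {k : ℕ} (hk : (σ ^ k) x = x) (n : ℕ) :
    (σ ^ n) x = (σ ^ (n % k)) x := by
  conv_lhs => rw [← Nat.div_add_mod n k, add_comm, pow_add, pow_mul]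
  rw [Equiv.Perm.mul_apply, pow_fix' hk]

variable [Finite α]

lemma exists_pow_fix (σ : Equiv.Perm α) (a : α) : ∃ k, 0 < k ∧ (σ ^ k) a = a :=
  ⟨orderOf σ, orderOf_pos σ, by rw [pow_orderOf_eq_one]; rfl⟩

lemma K2 {σ : Equiv.Perm α} {a b : α} (hab : a ≠ b) (hnc : ¬ σ.SameCycle a b) :
    (σ * Equiv.swap a b).SameCycle a b := by
  have hex : ∃ k, 0 < k ∧ (σ ^ k) a = a := exists_pow_fix σ a
  classical
  set k := Nat.find hex with hkdef
  obtain ⟨hk0, hkfix⟩ := Nat.find_spec hex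
  have hint : ∀ j, 0 < j → j < k → (σ ^ j) a ≠ a ∧ (σ ^ j) a ≠ b := by
    intro j hj hjk
    constructor
    · intro h; exact (Nat.find_min hex hjk) ⟨hj, h⟩
    · intro h; exact hnc ⟨j, by rw [zpow_natCast]; exact h⟩
  have := traj k hint k hk0 le_rfl
  rw [hkfix] at this
  exact Equiv.Perm.SameCycle.symm ⟨(k : ℤ), by rw [zpow_natCast]; exact this⟩

lemma K3 {σ : Equiv.Perm α} {a b : α} (hab : a ≠ b) (hsc : σ.SameCycle a b) :
    ¬ (σ * Equiv.swap a b).SameCycle a b := by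
  classical
  have hex : ∃ k, 0 < k ∧ ((σ ^ k) a = a ∨ (σ ^ k) a = b) := by
    obtain ⟨k, hk, h⟩ := exists_pow_fix σ a
    exact ⟨k, hk, Or.inl h⟩
  set k := Nat.find hex with hkdef
  obtain ⟨hk0, hkor⟩ := Nat.find_spec hex
  have hint : ∀ j, 0 < j → j < k → (σ ^ j) a ≠ a ∧ (σ ^ j) a ≠ b := by
    intro j hj hjk
    constructor
    · intro h; exact (Nat.find_min hex hjk) ⟨hj, Or.inl h⟩
    · intro h; exact (Nat.find_min hex hjk) ⟨hj, Or.inr h⟩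
  rcases hkor with hfix | hhit
  · -- σ^k a = a : then b is hit with exponent < k, contradiction
    exfalso
    obtain ⟨n, _, hn⟩ := hsc.exists_pow_eq'
    have hmod := perm_pow_eq_pow_mod hfix n
    rw [hn] at hmod
    have hnk : n % k < k := Nat.mod_lt _ hk0
    have hn0 : 0 < n % k := by
      rcases Nat.eq_zero_or_pos (n % k) with h0 | h; · rw [h0] at hmod; simp at hmod; exact absurd hmod (Ne.symm hab)
      exact h
    exact (hint _ hn0 hnk).2 hmod.symm
  · -- σ^k a = b : b has (σ*swap)-period k avoiding a
    intro hSC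
    have htraj := traj k hint
    have hper : ((σ * Equiv.swap a b) ^ k) b = b := by rw [htraj k hk0 le_rfl, hhit]
    obtain ⟨m, _, hm⟩ := hSC.symm.exists_pow_eq'
    have hmod := perm_pow_eq_pow_mod hper m
    rw [hm] at hmod
    have hmk : m % k < k := Nat.mod_lt _ hk0
    have hm0 : 0 < m % k := by
      rcases Nat.eq_zero_or_pos (m % k) with h0 | h
      · rw [h0] at hmod; simp at hmod; exact absurd hmod hab
      · exact h
    have := htraj (m % k) hm0 (le_of_lt hmk)
    rw [← hmod] at this
    exact (hint _ hm0 hmk).1 this.symm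

lemma sc_mul_swap_subset_join {σ : Equiv.Perm α} (a b : α) {x y : α}
    (h : (σ * Equiv.swap a b).SameCycle x y) :
    (joinPair (SameCycle.setoid σ) a b).r x y := by
  refine sameCycle_subset _ ?_ h
  intro x
  rcases eq_or_ne x a with rfl | hxa
  · refine Or.inr (Or.inl ⟨SameCycle.refl _ _, ?_⟩)
    rw [Equiv.Perm.mul_apply, Equiv.swap_apply_left]
    exact sc_step σ b
  rcases eq_or_ne x b with rfl | hxb
  · refine Or.inr (Or.inr ⟨SameCycle.refl _ _, ?_⟩)
    rw [Equiv.Perm.mul_apply, Equiv.swap_apply_right]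
    exact sc_step σ a
  · refine Or.inl ?_
    rw [Equiv.Perm.mul_apply, Equiv.swap_apply_of_ne_of_ne hxa hxb]
    exact sc_step σ x

lemma sc_subset_sc_mul_swap {σ : Equiv.Perm α} {a b : α} (hab : a ≠ b)
    (hnc : ¬ σ.SameCycle a b) {x y : α} (h : σ.SameCycle x y) :
    (σ * Equiv.swap a b).SameCycle x y := by
  refine sameCycle_subset (SameCycle.setoid (σ * Equiv.swap a b)) ?_ h
  intro x
  have h2 : (σ * Equiv.swap a b).SameCycle (Equiv.swap a b x) (σ x) := by
    have := sc_step (σ * Equiv.swap a b) (Equiv.swap a b x)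
    rwa [Equiv.Perm.mul_apply, Equiv.swap_apply_self] at this
  refine Equiv.Perm.SameCycle.trans ?_ h2
  rcases eq_or_ne x a with rfl | hxa
  · rw [Equiv.swap_apply_left]; exact K2 hab hnc
  rcases eq_or_ne x b with rfl | hxb
  · rw [Equiv.swap_apply_right]; exact (K2 hab hnc).symm
  · rw [Equiv.swap_apply_of_ne_of_ne hxa hxb]

lemma P1 {σ : Equiv.Perm α} {a b : α} (hab : a ≠ b) (hnc : ¬ σ.SameCycle a b) :
    orbs (σ * Equiv.swap a b) + 1 = orbs σ := by
  have hset : SameCycle.setoid (σ * Equiv.swap a b) = joinPair (SameCycle.setoid σ) a b := by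
    apply Setoid.ext
    intro x y
    constructor
    · exact sc_mul_swap_subset_join a b
    · intro h
      rcases h with h | ⟨h1, h2⟩ | ⟨h1, h2⟩
      · exact sc_subset_sc_mul_swap hab hnc h
      · exact ((sc_subset_sc_mul_swap hab hnc h1).trans (K2 hab hnc)).trans
          (sc_subset_sc_mul_swap hab hnc h2)
      · exact ((sc_subset_sc_mul_swap hab hnc h1).trans (K2 hab hnc).symm).trans
          (sc_subset_sc_mul_swap hab hnc h2)
  rw [orbs, hset]
  exact card_joinPair_add_one _ a b hnc

lemma P3 {σ : Equiv.Perm α} {a b : α} (hab : a ≠ b) (hsc : σ.SameCycle a b) :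
    orbs (σ * Equiv.swap a b) = orbs σ + 1 := by
  have h := P1 (σ := σ * Equiv.swap a b) hab (K3 hab hsc)
  rw [mul_assoc, Equiv.swap_mul_self, mul_one] at h
  omega

end SAux
end SAuxSec

/-- A ribbon graph (combinatorial map), given by a finite set of half-edges
together with a fixed-point-free involution `edgePair` (pairing the two half-edges
of each edge) and a rotation permutation `rot` whose cycles are the vertices with
their counterclockwise rotation system. -/
structure RibbonGraph where
  H : Type
  fintypeH : Fintype H
  decH : DecidableEq H
  edgePair : Equiv.Perm H
  rot : Equiv.Perm H
  edgePair_invol : ∀ h, edgePair (edgePair h) = h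
  edgePair_nofix : ∀ h, edgePair h ≠ h

namespace RibbonGraph

variable (G : RibbonGraph)

instance : Fintype G.H := G.fintypeH
instance : DecidableEq G.H := G.decH

/-- Edges are the orbits of the involution `edgePair`. -/
def edgeSetoid : Setoid G.H :=
  ⟨G.edgePair.SameCycle, ⟨fun _ => Equiv.Perm.SameCycle.refl _ _,
    fun h => h.symm, fun h h' => h.trans h'⟩⟩

def EdgeSet := Quotient G.edgeSetoid

instance : Finite G.EdgeSet := Quotient.finite _
instance : Fintype G.EdgeSet := Fintype.ofFinite _

def edgeOf (h : G.H) : G.EdgeSet := Quotient.mk G.edgeSetoid h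

/-- Vertices are the orbits of the rotation `rot`. -/
def vertexSetoid : Setoid G.H :=
  ⟨G.rot.SameCycle, ⟨fun _ => Equiv.Perm.SameCycle.refl _ _,
    fun h => h.symm, fun h h' => h.trans h'⟩⟩

def VertexSet := Quotient G.vertexSetoid

instance : Finite G.VertexSet := Quotient.finite _
instance : Fintype G.VertexSet := Fintype.ofFinite _

def vertexOf (h : G.H) : G.VertexSet := Quotient.mk G.vertexSetoid h

def numVertices : ℕ := Nat.card G.VertexSet
def numEdges : ℕ := Nat.card G.EdgeSet

/-- One step of the connectivity relation of `G − D` (`D` a set of deleted edges):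
half-edges at a common vertex are connected, as are the two halves of a kept edge.
Vertices all of whose half-edges are deleted remain as isolated components. -/
def connStep (D : Finset G.EdgeSet) (x y : G.H) : Prop :=
  G.rot.SameCycle x y ∨ (G.edgeOf x ∉ D ∧ y = G.edgePair x)

/-- `b₀(G − D)`: number of connected components of the deletion `G − D`. -/
def b0Del (D : Finset G.EdgeSet) : ℕ :=
  Nat.card (Quotient (Setoid.mk _ (Relation.EqvGen.is_equivalence (G.connStep D))))

def numEdgesDel (D : Finset G.EdgeSet) : ℕ := G.numEdges - D.card

/-- `b₁(G − D)`: the cycle rank `|E| − |V| + b₀` of the deletion. -/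
def b1Del (D : Finset G.EdgeSet) : ℤ :=
  (G.numEdgesDel D : ℤ) - (G.numVertices : ℤ) + (G.b0Del D : ℤ)

/-- One step of the face (boundary-walk) relation of `G − D`: from a kept half-edge `x`,
go to its partner and then rotate, skipping deleted half-edges. Its equivalence classes
through kept half-edges are the boundary components of `G − D`. -/
def faceStep (D : Finset G.EdgeSet) (x y : G.H) : Prop :=
  G.edgeOf x ∉ D ∧ G.edgeOf y ∉ D ∧
    ∃ m : ℕ, 0 < m ∧ y = (G.rot ^ m) (G.edgePair x) ∧
      ∀ j, 0 < j → j < m → G.edgeOf ((G.rot ^ j) (G.edgePair x)) ∈ D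

def faceSetoid (D : Finset G.EdgeSet) : Setoid G.H :=
  Setoid.mk _ (Relation.EqvGen.is_equivalence (G.faceStep D))

/-- The number of boundary components (faces) of the ribbon graph `G − D`:
face-classes of kept half-edges, plus one circle for each fully deleted vertex. -/
def facesDel (D : Finset G.EdgeSet) : ℕ :=
  Nat.card {c : Quotient (G.faceSetoid D) // ∃ h, G.edgeOf h ∉ D ∧ Quotient.mk (G.faceSetoid D) h = c}
    + Nat.card {v : G.VertexSet // ∀ h, G.vertexOf h = v → G.edgeOf h ∈ D}

/-- The genus of `G − D`, via the Euler characteristic relation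
`|V| − |E| + f = 2b₀ − 2g`, i.e. `2g = b₁ − f + b₀`. -/
def genusDel (D : Finset G.EdgeSet) : ℤ :=
  (G.b1Del D - (G.facesDel D : ℤ) + (G.b0Del D : ℤ)) / 2

/-- The `S`-polynomial state sum `S_G(Q) = Σ_{T⊆E} (−1)^{|T|} Q^{b₁(G−T) − g(G−T)}`. -/
def SPoly : Polynomial ℚ :=
  ∑ D : Finset G.EdgeSet, (-1 : Polynomial ℚ) ^ D.card * X ^ (G.b1Del D - G.genusDel D).toNat

/-- The flow polynomial state sum `F_G(Q) = Σ_{T⊆E} (−1)^{|T|} Q^{b₁(G−T)}`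
of the underlying graph. -/
def FPoly : Polynomial ℚ :=
  ∑ D : Finset G.EdgeSet, (-1 : Polynomial ℚ) ^ D.card * X ^ (G.b1Del D).toNat

/-- A bridge: an edge whose deletion increases the number of connected components. -/
def IsBridge (e : G.EdgeSet) : Prop := G.b0Del ∅ < G.b0Del {e}

/-- `e` is a coloop of the deletion `G − D`: the two boundary components of `G − D`
adjacent to (parallel to) the edge `e` coincide. -/
def IsColoopIn (D : Finset G.EdgeSet) (e : G.EdgeSet) : Prop :=
  e ∉ D ∧ ∃ a, G.edgeOf a = e ∧ Relation.EqvGen (G.faceStep D) a (G.edgePair a)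

/-- A coloop of `G`: the two boundary components adjacent to the edge coincide
(equivalently, the dual edge is a loop of the dual graph). -/
def IsColoop (e : G.EdgeSet) : Prop := G.IsColoopIn ∅ e

/-- Degree of the vertex containing the half-edge `h`: the length of its rotation cycle. -/
def vertexDegree (h : G.H) : ℕ := Nat.card {x : G.H // G.rot.SameCycle h x}

/-- Degree of a vertex: the number of half-edges incident to it. -/
def vDeg (v : G.VertexSet) : ℕ := Nat.card {h : G.H // G.vertexOf h = v}

end RibbonGraph


section RibbonAux
namespace RibbonGraph
open Equiv

variable (G : RibbonGraph)

lemma edgeOf_edgePair (x : G.H) : G.edgeOf (G.edgePair x) = G.edgeOf x :=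
  Quotient.sound (⟨1, by simpa using G.edgePair_invol x⟩ :
    G.edgePair.SameCycle (G.edgePair x) x)

/-- the pairing involution restricted to non-deleted edges -/
def epD (D : Finset G.EdgeSet) : Equiv.Perm G.H :=
  Function.Involutive.toPerm (fun x => if G.edgeOf x ∉ D then G.edgePair x else x) (by
    intro x
    dsimp only
    by_cases hx : G.edgeOf x ∉ D
    · rw [if_pos hx]
      have h2 : G.edgeOf (G.edgePair x) ∉ D := by rw [edgeOf_edgePair]; exact hx
      rw [if_pos h2]
      exact G.edgePair_invol x
    · rw [if_neg hx, if_neg hx])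

lemma epD_apply_kept {D : Finset G.EdgeSet} {x : G.H} (hx : G.edgeOf x ∉ D) :
    G.epD D x = G.edgePair x := by
  exact (if_pos hx : (if G.edgeOf x ∉ D then G.edgePair x else x) = G.edgePair x)

lemma epD_apply_del {D : Finset G.EdgeSet} {x : G.H} (hx : ¬ (G.edgeOf x ∉ D)) :
    G.epD D x = x := by
  exact (if_neg hx : (if G.edgeOf x ∉ D then G.edgePair x else x) = x)

/-- the face permutation generator: rotation after pairing -/
def sigmaD (D : Finset G.EdgeSet) : Equiv.Perm G.H := G.rot * G.epD D

lemma sigmaD_apply_kept {D : Finset G.EdgeSet} {x : G.H} (hx : G.edgeOf x ∉ D) :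
    G.sigmaD D x = G.rot (G.edgePair x) := by
  rw [sigmaD, Equiv.Perm.mul_apply, epD_apply_kept G hx]

lemma sigmaD_apply_del {D : Finset G.EdgeSet} {x : G.H} (hx : ¬ (G.edgeOf x ∉ D)) :
    G.sigmaD D x = G.rot x := by
  rw [sigmaD, Equiv.Perm.mul_apply, epD_apply_del G hx]

lemma sigmaD_pow_eq {D : Finset G.EdgeSet} {x : G.H} (hx : G.edgeOf x ∉ D) :
    ∀ j, (∀ i, 0 < i → i < j → ¬ (G.edgeOf ((G.sigmaD D ^ i) x) ∉ D)) → 0 < j →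
      (G.sigmaD D ^ j) x = (G.rot ^ j) (G.edgePair x) := by
  intro j
  induction j with
  | zero => intro _ h; omega
  | succ k ih =>
      intro hint _
      rcases Nat.eq_zero_or_pos k with rfl | hk
      · rw [pow_one, pow_one]; exact sigmaD_apply_kept G hx
      · have hkk := ih (fun i hi hik => hint i hi (by omega)) hk
        have hnk : ¬ (G.edgeOf ((G.sigmaD D ^ k) x) ∉ D) := hint k hk (by omega)
        rw [pow_succ', pow_succ', Equiv.Perm.mul_apply, Equiv.Perm.mul_apply,
          sigmaD_apply_del G hnk, hkk]

lemma sigmaD_pow_eq' {D : Finset G.EdgeSet} {x : G.H} (hx : G.edgeOf x ∉ D) :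
    ∀ j, (∀ i, 0 < i → i < j → ¬ (G.edgeOf ((G.rot ^ i) (G.edgePair x)) ∉ D)) → 0 < j →
      (G.sigmaD D ^ j) x = (G.rot ^ j) (G.edgePair x) := by
  intro j
  induction j using Nat.strong_induction_on with
  | _ j ihj =>
      intro hint hj
      have hsig : ∀ i, 0 < i → i < j → ¬ (G.edgeOf ((G.sigmaD D ^ i) x) ∉ D) := by
        intro i hi hij
        have := ihj i hij (fun t ht hti => hint t ht (by omega)) hi
        rw [this]
        exact hint i hi hij
      exact sigmaD_pow_eq G hx j hsig hj

lemma faceStep_iff {D : Finset G.EdgeSet} {x y : G.H} :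
    G.faceStep D x y ↔ (G.edgeOf x ∉ D ∧ G.edgeOf y ∉ D ∧
      ∃ m, 0 < m ∧ (G.sigmaD D ^ m) x = y ∧
        ∀ i, 0 < i → i < m → ¬ (G.edgeOf ((G.sigmaD D ^ i) x) ∉ D)) := by
  constructor
  · rintro ⟨hx, hy, m, hm, hym, hint⟩
    refine ⟨hx, hy, m, hm, ?_, ?_⟩
    · rw [sigmaD_pow_eq' G hx m (fun i hi him => by simpa using hint i hi him) hm]
      exact hym.symm
    · intro i hi him
      rw [sigmaD_pow_eq' G hx i (fun t ht hti => by simpa using hint t ht (by omega)) hi]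
      simpa using hint i hi him
  · rintro ⟨hx, hy, m, hm, hym, hint⟩
    refine ⟨hx, hy, m, hm, ?_, ?_⟩
    · rw [← sigmaD_pow_eq G hx m hint hm]; exact hym.symm
    · intro i hi him
      rw [← sigmaD_pow_eq G hx i (fun t ht hti => hint t ht (by omega)) hi]
      simpa using hint i hi him

lemma eqvGen_to_sameCycle {D : Finset G.EdgeSet} {x y : G.H}
    (h : Relation.EqvGen (G.faceStep D) x y) : (G.sigmaD D).SameCycle x y := by
  induction h with
  | rel a b hab =>
      obtain ⟨_, _, m, _, hm, _⟩ := (faceStep_iff G).1 hab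
      exact ⟨(m : ℤ), by rw [zpow_natCast]; exact hm⟩
  | refl a => exact Equiv.Perm.SameCycle.refl _ _
  | symm a b _ ih => exact ih.symm
  | trans a b c _ _ ih1 ih2 => exact ih1.trans ih2

lemma sameCycle_to_eqvGen {D : Finset G.EdgeSet} {x y : G.H}
    (hx : G.edgeOf x ∉ D) (hy : G.edgeOf y ∉ D) (h : (G.sigmaD D).SameCycle x y) :
    Relation.EqvGen (G.faceStep D) x y := by
  obtain ⟨n, -, hn⟩ := h.exists_pow_eq'
  clear h
  induction n using Nat.strong_induction_on generalizing y with
  | _ n ihn =>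
      rcases Nat.eq_zero_or_pos n with rfl | hnpos
      · simp only [pow_zero, Equiv.Perm.one_apply] at hn
        rw [← hn]; exact Relation.EqvGen.refl x
      · set P : ℕ → Prop := fun i => G.edgeOf ((G.sigmaD D ^ i) x) ∉ D with hP
        set i := Nat.findGreatest P (n - 1) with hidef
        have hi_le : i ≤ n - 1 := Nat.findGreatest_le _
        have hPi : P i := Nat.findGreatest_spec (Nat.zero_le _) (by simpa [hP] using hx)
        have hgt : ∀ jj, i < jj → jj ≤ n - 1 → ¬ P jj :=
          fun jj h1 h2 => Nat.findGreatest_is_greatest h1 h2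
        have hstep : G.faceStep D ((G.sigmaD D ^ i) x) y := by
          rw [faceStep_iff]
          refine ⟨hPi, hy, n - i, by omega, ?_, ?_⟩
          · rw [← Equiv.Perm.mul_apply, ← pow_add]
            rw [show n - i + i = n by omega]
            exact hn
          · intro t ht htm
            rw [← Equiv.Perm.mul_apply, ← pow_add]
            exact hgt (t + i) (by omega) (by omega)
        have hbase : Relation.EqvGen (G.faceStep D) x ((G.sigmaD D ^ i) x) :=
          ihn i (by omega) hPi rfl
        exact Relation.EqvGen.trans _ _ _ hbase (Relation.EqvGen.rel _ _ hstep)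

end RibbonGraph
end RibbonAux


section RibbonAux2
namespace RibbonGraph
open Equiv

variable (G : RibbonGraph)

/-- all half-edges at the vertex of `h` are deleted -/
def fullDel (D : Finset G.EdgeSet) (h : G.H) : Prop :=
  ∀ h', G.rot.SameCycle h h' → G.edgeOf h' ∈ D

lemma fullDel_pow {D : Finset G.EdgeSet} {h : G.H} (hf : G.fullDel D h) (n : ℕ) :
    (G.sigmaD D ^ n) h = (G.rot ^ n) h := by
  induction n with
  | zero => rfl
  | succ k ih =>
      have hmem : G.edgeOf ((G.rot ^ k) h) ∈ D := hf _ ⟨(k : ℤ), by rw [zpow_natCast]⟩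
      rw [pow_succ', pow_succ', Equiv.Perm.mul_apply, Equiv.Perm.mul_apply, ih,
        sigmaD_apply_del G (by simpa using hmem)]

/-- all half-edges on the sigma-orbit of `h` are deleted -/
def fullDelS (D : Finset G.EdgeSet) (h : G.H) : Prop :=
  ∀ h', (G.sigmaD D).SameCycle h h' → G.edgeOf h' ∈ D

lemma fullDelS_pow {D : Finset G.EdgeSet} {h : G.H} (hf : G.fullDelS D h) (n : ℕ) :
    (G.sigmaD D ^ n) h = (G.rot ^ n) h := by
  induction n with
  | zero => rfl
  | succ k ih =>
      have hmem : G.edgeOf ((G.sigmaD D ^ k) h) ∈ D :=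
        hf _ ⟨(k : ℤ), by rw [zpow_natCast]⟩
      rw [pow_succ', pow_succ', Equiv.Perm.mul_apply, Equiv.Perm.mul_apply,
        sigmaD_apply_del G (by simpa using hmem), ih]

lemma fullDel_iff_fullDelS (D : Finset G.EdgeSet) (h : G.H) :
    G.fullDel D h ↔ G.fullDelS D h := by
  constructor
  · intro hf h' hsc
    obtain ⟨n, -, hn⟩ := hsc.exists_pow_eq'
    rw [fullDel_pow G hf] at hn
    exact hf h' ⟨(n : ℤ), by rw [zpow_natCast]; exact hn⟩
  · intro hf h' hsc
    obtain ⟨n, -, hn⟩ := hsc.exists_pow_eq'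
    rw [← fullDelS_pow G hf] at hn
    exact hf h' ⟨(n : ℤ), by rw [zpow_natCast]; exact hn⟩

lemma sameCycle_rot_iff_sigma {D : Finset G.EdgeSet} {h h' : G.H} (hf : G.fullDel D h) :
    G.rot.SameCycle h h' ↔ (G.sigmaD D).SameCycle h h' := by
  constructor
  · intro hsc
    obtain ⟨n, -, hn⟩ := hsc.exists_pow_eq'
    exact ⟨(n : ℤ), by rw [zpow_natCast, fullDel_pow G hf]; exact hn⟩
  · intro hsc
    obtain ⟨n, -, hn⟩ := hsc.exists_pow_eq'
    rw [fullDel_pow G hf] at hn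
    exact ⟨(n : ℤ), by rw [zpow_natCast]; exact hn⟩

lemma facesDel_eq_orbs (D : Finset G.EdgeSet) :
    G.facesDel D = SAux.orbs (G.sigmaD D) := by
  classical
  rw [SAux.orbs, SAux.card_split
    (p := fun c : Quotient (Equiv.Perm.SameCycle.setoid (G.sigmaD D)) =>
      ∃ h, G.edgeOf h ∉ D ∧ Quotient.mk (Equiv.Perm.SameCycle.setoid (G.sigmaD D)) h = c)]
  unfold facesDel
  congr 1
  · -- kept faces
    rw [← SAux.card_quot_subtype (G.faceSetoid D) (fun h => G.edgeOf h ∉ D),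
      ← SAux.card_quot_subtype (Equiv.Perm.SameCycle.setoid (G.sigmaD D))
        (fun h => G.edgeOf h ∉ D)]
    have hs : Setoid.comap (Subtype.val : {h : G.H // G.edgeOf h ∉ D} → G.H)
          (G.faceSetoid D)
        = Setoid.comap (Subtype.val : {h : G.H // G.edgeOf h ∉ D} → G.H)
          (Equiv.Perm.SameCycle.setoid (G.sigmaD D)) := by
      apply Setoid.ext
      rintro ⟨x, hx⟩ ⟨y, hy⟩
      show Relation.EqvGen (G.faceStep D) x y ↔ (G.sigmaD D).SameCycle x y
      exact ⟨eqvGen_to_sameCycle G, sameCycle_to_eqvGen G hx hy⟩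
    rw [hs]
  · -- fully deleted vertices vs fully deleted sigma-classes
    have h1 : ∀ v : G.VertexSet, (∀ h, G.vertexOf h = v → G.edgeOf h ∈ D) ↔
        (∃ h, G.fullDel D h ∧ Quotient.mk G.vertexSetoid h = v) := by
      intro v
      constructor
      · intro hv
        obtain ⟨h0, rfl⟩ := Quotient.exists_rep v
        exact ⟨h0, fun h' hsc => hv h' (Quotient.sound hsc.symm), rfl⟩
      · rintro ⟨h, hfd, rfl⟩ h' hv'
        exact hfd h' (Equiv.Perm.SameCycle.symm (Quotient.exact hv'))
    have h2 : ∀ c : Quotient (Equiv.Perm.SameCycle.setoid (G.sigmaD D)),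
        (¬ ∃ h, G.edgeOf h ∉ D ∧
            Quotient.mk (Equiv.Perm.SameCycle.setoid (G.sigmaD D)) h = c) ↔
        (∃ h, G.fullDel D h ∧
            Quotient.mk (Equiv.Perm.SameCycle.setoid (G.sigmaD D)) h = c) := by
      intro c
      constructor
      · intro hc
        obtain ⟨h0, rfl⟩ := Quotient.exists_rep c
        refine ⟨h0, ?_, rfl⟩
        rw [fullDel_iff_fullDelS]
        intro h' hsc
        by_contra hk
        exact hc ⟨h', hk, Quotient.sound hsc.symm⟩
      · rintro ⟨h, hfd, rfl⟩ ⟨h'', hk, hc⟩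
        have hsc : (G.sigmaD D).SameCycle h'' h := Quotient.exact hc
        exact hk (((fullDel_iff_fullDelS G D h).1 hfd) h'' hsc.symm)
    have hset2 : Setoid.comap (Subtype.val : {h : G.H // G.fullDel D h} → G.H)
          G.vertexSetoid
        = Setoid.comap (Subtype.val : {h : G.H // G.fullDel D h} → G.H)
          (Equiv.Perm.SameCycle.setoid (G.sigmaD D)) := by
      apply Setoid.ext
      rintro ⟨x, hx⟩ ⟨y, hy⟩
      exact sameCycle_rot_iff_sigma G hx
    have eB1 : Nat.card {v : G.VertexSet // ∀ h, G.vertexOf h = v → G.edgeOf h ∈ D}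
        = Nat.card (Quotient (Setoid.comap
            (Subtype.val : {h : G.H // G.fullDel D h} → G.H) G.vertexSetoid)) :=
      (Nat.card_congr (Equiv.subtypeEquivRight h1)).trans
        (SAux.card_quot_subtype G.vertexSetoid (G.fullDel D)).symm
    have eB2 : Nat.card {c : Quotient (Equiv.Perm.SameCycle.setoid (G.sigmaD D)) //
          ¬ ∃ h, G.edgeOf h ∉ D ∧
            Quotient.mk (Equiv.Perm.SameCycle.setoid (G.sigmaD D)) h = c}
        = Nat.card (Quotient (Setoid.comap
            (Subtype.val : {h : G.H // G.fullDel D h} → G.H)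
            (Equiv.Perm.SameCycle.setoid (G.sigmaD D)))) :=
      (Nat.card_congr (Equiv.subtypeEquivRight h2)).trans
        (SAux.card_quot_subtype (Equiv.Perm.SameCycle.setoid (G.sigmaD D))
          (G.fullDel D)).symm
    rw [eB1, eB2, hset2]
end RibbonGraph
end RibbonAux2


section RibbonAux3
namespace RibbonGraph
open Equiv

variable (G : RibbonGraph)

lemma edgePair_sq : G.edgePair ^ 2 = 1 := by
  ext x
  simp [pow_two, G.edgePair_invol x]

lemma eq_or_pair_of_edgeOf_eq {x a : G.H} (h : G.edgeOf x = G.edgeOf a) :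
    x = a ∨ x = G.edgePair a := by
  have hsc : G.edgePair.SameCycle x a := Quotient.exact h
  obtain ⟨n, -, hn⟩ := hsc.exists_pow_eq'
  rcases Nat.even_or_odd n with ⟨c, hc⟩ | ⟨c, hc⟩
  · left
    rw [hc, ← two_mul, pow_mul, edgePair_sq, one_pow] at hn
    simpa using hn
  · right
    rw [hc, pow_add, pow_mul, edgePair_sq, one_pow, one_mul, pow_one] at hn
    rw [← hn, G.edgePair_invol x]

lemma sigmaD_insert {D : Finset G.EdgeSet} {e : G.EdgeSet} (he : e ∉ D) {a : G.H}
    (ha : G.edgeOf a = e) :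
    G.sigmaD (insert e D) = G.sigmaD D * Equiv.swap a (G.edgePair a) := by
  have hb : G.edgeOf (G.edgePair a) = e := by rw [edgeOf_edgePair]; exact ha
  ext x
  rw [Equiv.Perm.mul_apply]
  rcases eq_or_ne x a with rfl | hxa
  · rw [Equiv.swap_apply_left,
      sigmaD_apply_del G (by simp [Finset.mem_insert, ha]),
      sigmaD_apply_kept G (by rw [hb]; exact he), G.edgePair_invol]
  rcases eq_or_ne x (G.edgePair a) with rfl | hxb
  · rw [Equiv.swap_apply_right,
      sigmaD_apply_del G (by simp [Finset.mem_insert, hb]),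
      sigmaD_apply_kept G (by rw [ha]; exact he)]
  · rw [Equiv.swap_apply_of_ne_of_ne hxa hxb]
    have hxe : G.edgeOf x ≠ e := by
      intro hh
      rcases eq_or_pair_of_edgeOf_eq G (hh.trans ha.symm) with h1 | h1
      · exact hxa h1
      · exact hxb h1
    by_cases hx : G.edgeOf x ∉ D
    · rw [sigmaD_apply_kept G (by simp [Finset.mem_insert, hxe, hx]),
        sigmaD_apply_kept G hx]
    · rw [sigmaD_apply_del G (by simp only [Finset.mem_insert]; intro hcon; exact hcon (Or.inr (not_not.mp hx))),
        sigmaD_apply_del G hx]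

lemma isColoopIn_iff {D : Finset G.EdgeSet} {e : G.EdgeSet} (he : e ∉ D) {a : G.H}
    (ha : G.edgeOf a = e) :
    G.IsColoopIn D e ↔ (G.sigmaD D).SameCycle a (G.edgePair a) := by
  have hb : G.edgeOf (G.edgePair a) = e := by rw [edgeOf_edgePair]; exact ha
  constructor
  · rintro ⟨-, a', ha', hEq⟩
    have hsc := eqvGen_to_sameCycle G hEq
    rcases eq_or_pair_of_edgeOf_eq G (ha'.trans ha.symm) with rfl | rfl
    · exact hsc
    · rw [G.edgePair_invol] at hsc
      exact hsc.symm
  · intro hsc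
    exact ⟨he, a, ha, sameCycle_to_eqvGen G (by rw [ha]; exact he) (by rw [hb]; exact he) hsc⟩

lemma facesDel_insert_coloop {D : Finset G.EdgeSet} {e : G.EdgeSet} (he : e ∉ D)
    (hc : G.IsColoopIn D e) :
    G.facesDel (insert e D) = G.facesDel D + 1 := by
  obtain ⟨a, ha⟩ := Quotient.exists_rep e
  have ha' : G.edgeOf a = e := ha
  have hab : a ≠ G.edgePair a := (G.edgePair_nofix a).symm
  rw [facesDel_eq_orbs, facesDel_eq_orbs, sigmaD_insert G he ha']
  exact SAux.P3 hab ((isColoopIn_iff G he ha').1 hc)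

lemma facesDel_insert_notcoloop {D : Finset G.EdgeSet} {e : G.EdgeSet} (he : e ∉ D)
    (hc : ¬ G.IsColoopIn D e) :
    G.facesDel (insert e D) + 1 = G.facesDel D := by
  obtain ⟨a, ha⟩ := Quotient.exists_rep e
  have ha' : G.edgeOf a = e := ha
  have hab : a ≠ G.edgePair a := (G.edgePair_nofix a).symm
  rw [facesDel_eq_orbs, facesDel_eq_orbs, sigmaD_insert G he ha']
  exact SAux.P1 hab (fun hsc => hc ((isColoopIn_iff G he ha').2 hsc))

end RibbonGraph
end RibbonAux3


section RibbonAux4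
namespace RibbonGraph
open Equiv

variable (G : RibbonGraph)

lemma numEdges_eq_card_univ : G.numEdges = (Finset.univ : Finset G.EdgeSet).card := by
  rw [numEdges, Nat.card_eq_fintype_card, Finset.card_univ]

lemma sigmaD_univ : G.sigmaD (Finset.univ : Finset G.EdgeSet) = G.rot := by
  have h : G.epD (Finset.univ : Finset G.EdgeSet) = 1 := by
    ext x
    have : ¬ (G.edgeOf x ∉ (Finset.univ : Finset G.EdgeSet)) := by simp
    simp [epD_apply_del G this]
  rw [sigmaD, h, mul_one]

lemma facesDel_univ : G.facesDel (Finset.univ : Finset G.EdgeSet) = G.numVertices := by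
  rw [facesDel_eq_orbs, sigmaD_univ, SAux.orbs, numVertices]
  have h : Equiv.Perm.SameCycle.setoid G.rot = G.vertexSetoid :=
    Setoid.ext fun x y => Iff.rfl
  rw [h]
  rfl

lemma numEdgesDel_insert {D : Finset G.EdgeSet} {e : G.EdgeSet} (he : e ∉ D) :
    G.numEdgesDel (insert e D) + 1 = G.numEdgesDel D := by
  have h1 : (insert e D).card = D.card + 1 := Finset.card_insert_of_notMem he
  have h2 : (insert e D).card ≤ (Finset.univ : Finset G.EdgeSet).card :=
    Finset.card_le_univ _
  rw [numEdgesDel, numEdgesDel, h1, numEdges_eq_card_univ]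
  omega

lemma facesDel_parity (D : Finset G.EdgeSet) :
    Even (G.facesDel D + G.numEdgesDel D + G.numVertices) := by
  classical
  suffices H : ∀ n (D : Finset G.EdgeSet),
      ((Finset.univ : Finset G.EdgeSet) \ D).card = n →
      Even (G.facesDel D + G.numEdgesDel D + G.numVertices) from H _ D rfl
  intro n
  induction n with
  | zero =>
      intro D hD
      have hsub : (Finset.univ : Finset G.EdgeSet) ⊆ D := by
        rw [← Finset.sdiff_eq_empty_iff_subset, ← Finset.card_eq_zero, hD]
      have hDu : D = Finset.univ := Finset.eq_univ_iff_forall.mpr (fun e => hsub (Finset.mem_univ e))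
      subst hDu
      rw [facesDel_univ, numEdgesDel, numEdges_eq_card_univ, Nat.sub_self]
      exact ⟨G.numVertices, by omega⟩
  | succ n ih =>
      intro D hD
      have hne : ((Finset.univ : Finset G.EdgeSet) \ D).Nonempty := by
        rw [← Finset.card_pos, hD]; omega
      obtain ⟨e, hemem⟩ := hne
      have he : e ∉ D := (Finset.mem_sdiff.mp hemem).2
      have hsd : (Finset.univ : Finset G.EdgeSet) \ insert e D
          = ((Finset.univ : Finset G.EdgeSet) \ D).erase e := by
        ext f
        simp only [Finset.mem_sdiff, Finset.mem_insert, Finset.mem_erase, Finset.mem_univ,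
          true_and]
        tauto
      have hcard : ((Finset.univ : Finset G.EdgeSet) \ insert e D).card = n := by
        rw [hsd, Finset.card_erase_of_mem hemem, hD]
        omega
      have hEv := ih (insert e D) hcard
      have hE := numEdgesDel_insert G he
      rw [Nat.even_iff] at hEv ⊢
      by_cases hc : G.IsColoopIn D e
      · have hf := facesDel_insert_coloop G he hc
        omega
      · have hf := facesDel_insert_notcoloop G he hc
        omega

/-- the exponent of the state-sum term -/
def eexp (D : Finset G.EdgeSet) : ℤ := G.b1Del D - G.genusDel D

lemma two_mul_eexp (D : Finset G.EdgeSet) :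
    2 * G.eexp D = (G.numEdgesDel D : ℤ) - (G.numVertices : ℤ) + (G.facesDel D : ℤ) := by
  obtain ⟨r, hr⟩ := facesDel_parity G D
  have hr' : (G.facesDel D : ℤ) + (G.numEdgesDel D : ℤ) + (G.numVertices : ℤ)
      = (r : ℤ) + (r : ℤ) := by exact_mod_cast hr
  unfold eexp genusDel b1Del
  omega

end RibbonGraph
end RibbonAux4


section RibbonAux5
namespace RibbonGraph
open Equiv

variable (G : RibbonGraph)

lemma eexp_insert_le {D : Finset G.EdgeSet} {e : G.EdgeSet} (he : e ∉ D) :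
    G.eexp (insert e D) ≤ G.eexp D := by
  have h1 := two_mul_eexp G D
  have h2 := two_mul_eexp G (insert e D)
  have hE := numEdgesDel_insert G he
  by_cases hc : G.IsColoopIn D e
  · have hf := facesDel_insert_coloop G he hc
    omega
  · have hf := facesDel_insert_notcoloop G he hc
    omega

lemma eexp_insert_notcoloop {D : Finset G.EdgeSet} {e : G.EdgeSet} (he : e ∉ D)
    (hc : ¬ G.IsColoopIn D e) : G.eexp (insert e D) = G.eexp D - 1 := by
  have h1 := two_mul_eexp G D
  have h2 := two_mul_eexp G (insert e D)
  have hE := numEdgesDel_insert G he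
  have hf := facesDel_insert_notcoloop G he hc
  omega

lemma eexp_mono {D D' : Finset G.EdgeSet} (hsub : D ⊆ D') : G.eexp D' ≤ G.eexp D := by
  classical
  suffices H : ∀ n (D D' : Finset G.EdgeSet), D ⊆ D' → (D' \ D).card = n →
      G.eexp D' ≤ G.eexp D from H _ D D' hsub rfl
  intro n
  induction n with
  | zero =>
      intro D D' hsub hcard
      have : D' ⊆ D := by
        rw [← Finset.sdiff_eq_empty_iff_subset, ← Finset.card_eq_zero, hcard]
      rw [Finset.Subset.antisymm hsub this]
  | succ n ih =>
      intro D D' hsub hcard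
      have hne : (D' \ D).Nonempty := by rw [← Finset.card_pos, hcard]; omega
      obtain ⟨e, hemem⟩ := hne
      obtain ⟨heD', heD⟩ := Finset.mem_sdiff.mp hemem
      have hsub2 : insert e D ⊆ D' := by
        intro x hx
        rcases Finset.mem_insert.mp hx with rfl | hx'
        · exact heD'
        · exact hsub hx'
      have hcard2 : (D' \ insert e D).card = n := by
        have hsd : D' \ insert e D = (D' \ D).erase e := by
          ext f
          simp only [Finset.mem_sdiff, Finset.mem_insert, Finset.mem_erase]
          tauto
        rw [hsd, Finset.card_erase_of_mem hemem, hcard]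
        omega
      exact le_trans (ih (insert e D) D' hsub2 hcard2) (eexp_insert_le G heD)

lemma eexp_univ : G.eexp (Finset.univ : Finset G.EdgeSet) = 0 := by
  have h := two_mul_eexp G (Finset.univ : Finset G.EdgeSet)
  rw [facesDel_univ, numEdgesDel, numEdges_eq_card_univ, Nat.sub_self] at h
  omega

lemma eexp_nonneg (D : Finset G.EdgeSet) : 0 ≤ G.eexp D := by
  have := eexp_mono G (Finset.subset_univ D)
  rw [eexp_univ] at this
  linarith

lemma eexp_lt_of_ne_empty (hnc : ∀ e : G.EdgeSet, ¬ G.IsColoop e)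
    {D : Finset G.EdgeSet} (hD : D ≠ ∅) : G.eexp D ≤ G.eexp ∅ - 1 := by
  obtain ⟨e, he⟩ := Finset.nonempty_iff_ne_empty.mpr hD
  have h1 : G.eexp D ≤ G.eexp {e} := by
    apply eexp_mono
    intro x hx
    rwa [Finset.mem_singleton.mp hx]
  have h2 : G.eexp {e} = G.eexp ∅ - 1 := by
    have : ({e} : Finset G.EdgeSet) = insert e ∅ := rfl
    rw [this]
    exact eexp_insert_notcoloop G (Finset.notMem_empty e) (hnc e)
  omega

end RibbonGraph
end RibbonAux5

/-- For a virtual graph `G`, `deg S_G(Q) ≤ b₁(G) − g(G)`; if `G` has no coloops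
then equality holds and `S_G(Q)` is monic. -/
theorem stmt2 (G : RibbonGraph) :
    G.SPoly.degree ≤ (((G.b1Del ∅ - G.genusDel ∅).toNat : ℕ) : WithBot ℕ) ∧
    ((∀ e : G.EdgeSet, ¬ G.IsColoop e) →
      G.SPoly.Monic ∧ (G.SPoly.natDegree : ℤ) = G.b1Del ∅ - G.genusDel ∅) := by
  classical
  have heq : ∀ D : Finset G.EdgeSet, G.b1Del D - G.genusDel D = G.eexp D := fun _ => rfl
  set n : ℕ := (G.eexp ∅).toNat with hn
  have hCpow : ∀ k : ℕ, ((-1 : Polynomial ℚ)) ^ k = Polynomial.C ((-1 : ℚ) ^ k) := by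
    intro k
    rw [map_pow, map_neg, map_one]
  have hdegterm : ∀ D : Finset G.EdgeSet,
      ((-1 : Polynomial ℚ) ^ D.card * X ^ (G.b1Del D - G.genusDel D).toNat).degree
        ≤ ((n : ℕ) : WithBot ℕ) := by
    intro D
    refine le_trans (Polynomial.degree_mul_le _ _) ?_
    have h1 : ((-1 : Polynomial ℚ) ^ D.card).degree ≤ 0 := by
      rw [hCpow]
      exact Polynomial.degree_C_le
    have h2 : (X ^ (G.b1Del D - G.genusDel D).toNat : Polynomial ℚ).degree
        ≤ ((n : ℕ) : WithBot ℕ) := by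
      rw [Polynomial.degree_X_pow, heq]
      have hle : (G.eexp D).toNat ≤ n := by
        have := RibbonGraph.eexp_mono G (Finset.empty_subset D)
        omega
      exact_mod_cast hle
    calc ((-1 : Polynomial ℚ) ^ D.card).degree
          + (X ^ (G.b1Del D - G.genusDel D).toNat : Polynomial ℚ).degree
        ≤ 0 + ((n : ℕ) : WithBot ℕ) := add_le_add h1 h2
      _ = ((n : ℕ) : WithBot ℕ) := zero_add _
  have hdeg : G.SPoly.degree ≤ ((n : ℕ) : WithBot ℕ) := by
    refine le_trans (Polynomial.degree_sum_le _ _) ?_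
    exact Finset.sup_le fun D _ => hdegterm D
  refine ⟨by rw [heq]; exact hdeg, ?_⟩
  intro hnc
  have hcoeff : G.SPoly.coeff n = 1 := by
    rw [RibbonGraph.SPoly, Polynomial.finset_sum_coeff]
    rw [Finset.sum_eq_single (∅ : Finset G.EdgeSet)]
    · rw [Finset.card_empty, pow_zero, one_mul, heq, Polynomial.coeff_X_pow, if_pos rfl]
    · intro D _ hDne
      have hlt : (G.eexp D).toNat < n := by
        have h1 := RibbonGraph.eexp_lt_of_ne_empty G hnc hDne
        have h2 := RibbonGraph.eexp_nonneg G D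
        omega
      rw [hCpow, heq, Polynomial.coeff_C_mul, Polynomial.coeff_X_pow,
        if_neg (by omega), mul_zero]
    · intro h
      exact absurd (Finset.mem_univ _) h
  have hdegree_eq : G.SPoly.degree = ((n : ℕ) : WithBot ℕ) :=
    le_antisymm hdeg (Polynomial.le_degree_of_ne_zero (by rw [hcoeff]; exact one_ne_zero))
  have hnat : G.SPoly.natDegree = n := Polynomial.natDegree_eq_of_degree_eq_some hdegree_eq
  refine ⟨?_, ?_⟩
  · rw [Polynomial.Monic, Polynomial.leadingCoeff, hnat]
    exact hcoeff
  · rw [hnat, heq, hn]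
    exact Int.toNat_of_nonneg (RibbonGraph.eexp_nonneg G ∅)
end
end

section
/- For every finite graph G, the flow polynomial evaluated at Q = 1 is zero (when G has at least one edge); more generally, the renormalized polynomial f_G(x) = (−1)^{b_1(G)} F_G(1−x) of a bridgeless graph G is a polynomial of degree b_1(G) with nonnegative integer coefficients. -/
open Polynomial

noncomputable section
open scoped Classical

open Relation

set_option linter.unusedSectionVars false

section Ncomp
variable {V : Type} [Finite V]

def nsetoid (R : V → V → Prop) : Setoid V :=
  Setoid.mk _ (Relation.EqvGen.is_equivalence R)

def ncomp (R : V → V → Prop) : ℕ :=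
  Nat.card (Quotient (nsetoid R))

theorem eqvGen_le {R S : V → V → Prop} (h : ∀ u v, R u v → EqvGen S u v) :
    ∀ u v, EqvGen R u v → EqvGen S u v := by
  intro u v huv
  have := Relation.EqvGen.mono h u v huv
  rwa [(Relation.EqvGen.is_equivalence S).eqvGen_iff] at this

theorem ncomp_congr {R S : V → V → Prop}
    (h : ∀ u v, EqvGen R u v ↔ EqvGen S u v) : ncomp R = ncomp S := by
  have : nsetoid R = nsetoid S := Setoid.ext h
  exact congrArg (fun s => Nat.card (Quotient s)) this

theorem ncomp_le {R S : V → V → Prop} (h : ∀ u v, R u v → EqvGen S u v) :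
    ncomp S ≤ ncomp R := by
  let f : Quotient (nsetoid R) → Quotient (nsetoid S) :=
    Quotient.lift (fun v => Quotient.mk (nsetoid S) v)
      (fun a b hab => Quotient.sound (eqvGen_le h a b hab))
  have hsurj : Function.Surjective f := by
    intro q
    obtain ⟨v, rfl⟩ := Quotient.exists_rep q
    exact ⟨Quotient.mk _ v, rfl⟩
  exact Nat.card_le_card_of_surjective f hsurj

/-- Structure of `EqvGen` after adding one pair. -/
theorem eqvGen_pair_cases {R : V → V → Prop} {a b : V} {u v : V}
    (h : EqvGen (fun x y => R x y ∨ (x = a ∧ y = b)) u v) :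
    EqvGen R u v ∨ (EqvGen R u a ∧ EqvGen R b v) ∨ (EqvGen R u b ∧ EqvGen R a v) := by
  induction h with
  | rel x y hxy =>
    rcases hxy with h | ⟨rfl, rfl⟩
    · exact Or.inl (EqvGen.rel _ _ h)
    · exact Or.inr (Or.inl ⟨EqvGen.refl _, EqvGen.refl _⟩)
  | refl x => exact Or.inl (EqvGen.refl x)
  | symm x y _ ih =>
    rcases ih with h | ⟨h1, h2⟩ | ⟨h1, h2⟩
    · exact Or.inl h.symm
    · exact Or.inr (Or.inr ⟨h2.symm, h1.symm⟩)
    · exact Or.inr (Or.inl ⟨h2.symm, h1.symm⟩)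
  | trans x y z _ _ ih1 ih2 =>
    have tr : ∀ {p q r : V}, EqvGen R p q → EqvGen R q r → EqvGen R p r :=
      fun h1 h2 => (Relation.EqvGen.is_equivalence R).trans h1 h2
    have sy : ∀ {p q : V}, EqvGen R p q → EqvGen R q p :=
      fun h1 => (Relation.EqvGen.is_equivalence R).symm h1
    rcases ih1 with h | ⟨h1, h2⟩ | ⟨h1, h2⟩ <;>
      rcases ih2 with h' | ⟨h1', h2'⟩ | ⟨h1', h2'⟩
    · exact Or.inl (tr h h')
    · exact Or.inr (Or.inl ⟨tr h h1', h2'⟩)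
    · exact Or.inr (Or.inr ⟨tr h h1', h2'⟩)
    · exact Or.inr (Or.inl ⟨h1, tr h2 h'⟩)
    · exact Or.inl (tr h1 (tr (sy (tr h2 h1')) h2'))
    · exact Or.inl (tr h1 h2')
    · exact Or.inr (Or.inr ⟨h1, tr h2 h'⟩)
    · exact Or.inl (tr h1 h2')
    · exact Or.inl (tr h1 (tr (sy (tr h2 h1')) h2'))

theorem eqvGen_pair_le {R : V → V → Prop} {a b : V} :
    ∀ u v, EqvGen R u v → EqvGen (fun x y => R x y ∨ (x = a ∧ y = b)) u v :=
  fun _ _ h => Relation.EqvGen.mono (fun _ _ hr => Or.inl hr) _ _ h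

theorem ncomp_pair_of_rel {R : V → V → Prop} {a b : V} (h : EqvGen R a b) :
    ncomp (fun x y => R x y ∨ (x = a ∧ y = b)) = ncomp R := by
  refine ncomp_congr fun u v => ⟨fun huv => ?_, fun huv => eqvGen_pair_le u v huv⟩
  rcases eqvGen_pair_cases huv with h' | ⟨h1, h2⟩ | ⟨h1, h2⟩
  · exact h'
  · exact (Relation.EqvGen.is_equivalence R).trans h1
      ((Relation.EqvGen.is_equivalence R).trans h h2)
  · exact (Relation.EqvGen.is_equivalence R).trans h1
      ((Relation.EqvGen.is_equivalence R).trans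
        ((Relation.EqvGen.is_equivalence R).symm h) h2)

theorem ncomp_pair_of_not_rel {R : V → V → Prop} {a b : V} (h : ¬ EqvGen R a b) :
    ncomp R = ncomp (fun x y => R x y ∨ (x = a ∧ y = b)) + 1 := by
  set S : V → V → Prop := fun x y => R x y ∨ (x = a ∧ y = b) with hS
  have tr : ∀ {p q r : V}, EqvGen R p q → EqvGen R q r → EqvGen R p r :=
    fun h1 h2 => (Relation.EqvGen.is_equivalence R).trans h1 h2
  have sy : ∀ {p q : V}, EqvGen R p q → EqvGen R q p :=
    fun h1 => (Relation.EqvGen.is_equivalence R).symm h1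
  let φ : Quotient (nsetoid R) → Quotient (nsetoid S) :=
    Quotient.lift (fun v => Quotient.mk (nsetoid S) v)
      (fun p q hpq => Quotient.sound (eqvGen_pair_le p q hpq))
  let ψ : {z : Quotient (nsetoid R) // z ≠ Quotient.mk (nsetoid R) b} → Quotient (nsetoid S) :=
    fun z => φ z.1
  have hinj : Function.Injective ψ := by
    rintro ⟨z, hz⟩ ⟨w, hw⟩ hzw
    obtain ⟨u, rfl⟩ := Quotient.exists_rep z
    obtain ⟨v, rfl⟩ := Quotient.exists_rep w
    have huv : EqvGen S u v := Quotient.exact hzw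
    rcases eqvGen_pair_cases huv with h' | ⟨h1, h2⟩ | ⟨h1, h2⟩
    · exact Subtype.ext (Quotient.sound h')
    · exact absurd (Quotient.sound (sy h2)) hw
    · exact absurd (Quotient.sound h1) hz
  have hsurj : Function.Surjective ψ := by
    intro q
    obtain ⟨u, rfl⟩ := Quotient.exists_rep q
    by_cases hub : EqvGen R u b
    · refine ⟨⟨Quotient.mk (nsetoid R) a, fun hab => h (Quotient.exact hab)⟩, ?_⟩
      refine Quotient.sound ?_
      exact (Relation.EqvGen.is_equivalence S).trans (Relation.EqvGen.rel _ _ (Or.inr ⟨rfl, rfl⟩))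
        ((Relation.EqvGen.is_equivalence S).symm (eqvGen_pair_le u b hub))
    · exact ⟨⟨Quotient.mk (nsetoid R) u, fun hub' => hub (Quotient.exact hub')⟩, rfl⟩
  have hcardS : ncomp S = Nat.card {z : Quotient (nsetoid R) // z ≠ Quotient.mk (nsetoid R) b} :=
    (Nat.card_congr (Equiv.ofBijective ψ ⟨hinj, hsurj⟩)).symm
  have hcardR : ncomp R
      = Nat.card {z : Quotient (nsetoid R) // z ≠ Quotient.mk (nsetoid R) b} + 1 := by
    have := Nat.card_congr (Equiv.optionSubtypeNe (Quotient.mk (nsetoid R) b)).symm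
    rw [ncomp, this, Finite.card_option]
  rw [hcardR, hcardS]

theorem ncomp_le_pair_add_one {R : V → V → Prop} {a b : V} :
    ncomp R ≤ ncomp (fun x y => R x y ∨ (x = a ∧ y = b)) + 1 := by
  by_cases h : EqvGen R a b
  · rw [ncomp_pair_of_rel h]; omega
  · exact le_of_eq (ncomp_pair_of_not_rel h)

end Ncomp

/-- A finite multigraph, with an (arbitrary) orientation of each edge recorded by
`ends e = (tail, head)`. -/
structure Multigraph where
  V : Type
  E : Type
  fintypeV : Fintype V
  fintypeE : Fintype E
  ends : E → V × V

namespace Multigraph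

variable (G : Multigraph)

instance : Fintype G.V := G.fintypeV
instance : Fintype G.E := G.fintypeE

/-- Adjacency in the deletion `G − D` (`D` a set of deleted edges). -/
def step (D : Finset G.E) (u v : G.V) : Prop :=
  ∃ e, e ∉ D ∧ (G.ends e = (u, v) ∨ G.ends e = (v, u))

/-- `b₀(G − D)`: the number of connected components of the graph obtained by
deleting the edges in `D` (keeping all vertices). -/
def b0Del (D : Finset G.E) : ℕ :=
  Nat.card (Quotient (Setoid.mk _ (Relation.EqvGen.is_equivalence (G.step D))))

/-- `b₁(G − D)`: the cycle rank `|E ∖ D| − |V| + b₀(G − D)` of the deletion. -/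
def b1Del (D : Finset G.E) : ℤ :=
  ((Fintype.card G.E - D.card : ℕ) : ℤ) - (Fintype.card G.V : ℤ) + (G.b0Del D : ℤ)

/-- The flow polynomial `F_G(Q) = Σ_{T⊆E} (−1)^{|T|} Q^{b₁(G−T)}`. -/
def FPoly : Polynomial ℚ :=
  ∑ D : Finset G.E, (-1 : Polynomial ℚ) ^ D.card * X ^ (G.b1Del D).toNat

/-- A bridge: an edge whose deletion increases the number of connected components. -/
def IsBridge (e : G.E) : Prop := G.b0Del ∅ < G.b0Del {e}

/-- The degree of a vertex (loops count twice). -/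
def deg (v : G.V) : ℕ :=
  ∑ e : G.E, ((if (G.ends e).1 = v then 1 else 0) + (if (G.ends e).2 = v then 1 else 0))

theorem b0Del_eq (D : Finset G.E) : G.b0Del D = ncomp (G.step D) := rfl

/-- delete the edge `e` -/
@[reducible] def del (e : G.E) : Multigraph where
  V := G.V
  E := {f : G.E // f ≠ e}
  fintypeV := G.fintypeV
  fintypeE := inferInstance
  ends f := G.ends f.1

/-- the vertex map collapsing the head of `e` to its tail -/
def rmap (e : G.E) (v : G.V) : G.V := if v = (G.ends e).2 then (G.ends e).1 else v

/-- contract the edge `e` -/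
@[reducible] def con (e : G.E) : Multigraph where
  V := G.V
  E := {f : G.E // f ≠ e}
  fintypeV := G.fintypeV
  fintypeE := inferInstance
  ends f := (G.rmap e (G.ends f.1).1, G.rmap e (G.ends f.1).2)

def lifts (e : G.E) (D : Finset {f : G.E // f ≠ e}) : Finset G.E :=
  D.map (Function.Embedding.subtype _)

theorem mem_lifts {e : G.E} {D : Finset {f : G.E // f ≠ e}} {f : G.E} :
    f ∈ G.lifts e D ↔ ∃ h : f ≠ e, ⟨f, h⟩ ∈ D := by
  simp [lifts]

theorem not_mem_lifts (e : G.E) (D : Finset {f : G.E // f ≠ e}) : e ∉ G.lifts e D := by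
  rw [mem_lifts]; rintro ⟨h, -⟩; exact h rfl

theorem card_lifts (e : G.E) (D : Finset {f : G.E // f ≠ e}) :
    (G.lifts e D).card = D.card := Finset.card_map _

theorem lifts_empty (e : G.E) : G.lifts e ∅ = ∅ := rfl

theorem card_E_del (e : G.E) : Fintype.card {f : G.E // f ≠ e} + 1 = Fintype.card G.E := by
  have := Fintype.card_congr (Equiv.optionSubtypeNe e)
  simpa [Fintype.card_option, add_comm] using this

/-- `b₀` of a deletion graph. -/
theorem b0_del (e : G.E) (D : Finset {f : G.E // f ≠ e}) :
    (G.del e).b0Del D = G.b0Del (insert e (G.lifts e D)) := by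
  rw [b0Del_eq, b0Del_eq]
  refine ncomp_congr fun u v => ⟨eqvGen_le ?_ u v, eqvGen_le ?_ u v⟩
  · rintro x y ⟨f, hf, hends⟩
    refine EqvGen.rel _ _ ⟨f.1, ?_, hends⟩
    simp only [Finset.mem_insert, not_or]
    refine ⟨f.2, ?_⟩
    rw [mem_lifts]; rintro ⟨h, hm⟩; exact hf (by simpa using hm)
  · rintro x y ⟨f, hf, hends⟩
    simp only [Finset.mem_insert, not_or, mem_lifts] at hf
    refine EqvGen.rel _ _ ⟨⟨f, hf.1⟩, fun hm => hf.2 ⟨hf.1, hm⟩, hends⟩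

/-- Splitting off one edge from the step relation. -/
theorem eqvGen_step_insert (e : G.E) (D : Finset G.E) (he : e ∉ D) (u v : G.V) :
    EqvGen (G.step D) u v ↔
      EqvGen (fun x y => G.step (insert e D) x y ∨ (x = (G.ends e).1 ∧ y = (G.ends e).2)) u v := by
  set S := fun x y => G.step (insert e D) x y ∨ (x = (G.ends e).1 ∧ y = (G.ends e).2) with hSdef
  constructor
  · refine eqvGen_le ?_ u v
    rintro x y ⟨f, hf, hends⟩
    by_cases hfe : f = e
    · subst hfe
      rcases hends with h | h
      · exact EqvGen.rel _ _ (Or.inr ⟨by rw [h], by rw [h]⟩)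
      · exact (Relation.EqvGen.is_equivalence S).symm
          (EqvGen.rel _ _ (Or.inr ⟨by rw [h], by rw [h]⟩))
    · exact EqvGen.rel _ _ (Or.inl ⟨f, by simp [hfe, hf], hends⟩)
  · refine eqvGen_le ?_ u v
    rintro x y (⟨f, hf, hends⟩ | ⟨rfl, rfl⟩)
    · exact EqvGen.rel _ _ ⟨f, fun hm => hf (Finset.mem_insert_of_mem hm), hends⟩
    · exact EqvGen.rel _ _ ⟨e, he, Or.inl rfl⟩

theorem b0_le_insert (e : G.E) (D : Finset G.E) : G.b0Del D ≤ G.b0Del (insert e D) := by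
  rw [b0Del_eq, b0Del_eq]
  exact ncomp_le fun u v ⟨f, hf, hends⟩ =>
    EqvGen.rel _ _ ⟨f, fun hm => hf (Finset.mem_insert_of_mem hm), hends⟩

theorem b0_insert_of_rel {e : G.E} {D : Finset G.E} (he : e ∉ D)
    (h : EqvGen (G.step (insert e D)) (G.ends e).1 (G.ends e).2) :
    G.b0Del (insert e D) = G.b0Del D := by
  rw [b0Del_eq, b0Del_eq, ncomp_congr (eqvGen_step_insert G e D he), ncomp_pair_of_rel h]

theorem b0_insert_of_not_rel {e : G.E} {D : Finset G.E} (he : e ∉ D)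
    (h : ¬ EqvGen (G.step (insert e D)) (G.ends e).1 (G.ends e).2) :
    G.b0Del (insert e D) = G.b0Del D + 1 := by
  rw [b0Del_eq, b0Del_eq, ncomp_congr (eqvGen_step_insert G e D he), ncomp_pair_of_not_rel h]

theorem b0_insert_le (e : G.E) (D : Finset G.E) : G.b0Del (insert e D) ≤ G.b0Del D + 1 := by
  by_cases he : e ∈ D
  · rw [Finset.insert_eq_self.2 he]; omega
  by_cases h : EqvGen (G.step (insert e D)) (G.ends e).1 (G.ends e).2
  · rw [b0_insert_of_rel G he h]; omega
  · rw [b0_insert_of_not_rel G he h]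

theorem b0_insert_loop {e : G.E} (hl : (G.ends e).1 = (G.ends e).2) (D : Finset G.E) :
    G.b0Del (insert e D) = G.b0Del D := by
  by_cases he : e ∈ D
  · rw [Finset.insert_eq_self.2 he]
  · exact b0_insert_of_rel G he (hl ▸ EqvGen.refl _)

theorem isBridge_iff (e : G.E) :
    G.IsBridge e ↔ ¬ EqvGen (G.step {e}) (G.ends e).1 (G.ends e).2 := by
  have hins : ({e} : Finset G.E) = insert e ∅ := rfl
  constructor
  · intro hb h
    rw [IsBridge, hins, b0_insert_of_rel G (Finset.notMem_empty e) (hins ▸ h)] at hb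
    omega
  · intro h
    rw [IsBridge, hins, b0_insert_of_not_rel G (Finset.notMem_empty e) (hins ▸ h)]
    omega

theorem b0_insert_bridge {e : G.E} (hb : G.IsBridge e) {D : Finset G.E} (he : e ∉ D) :
    G.b0Del (insert e D) = G.b0Del D + 1 := by
  refine b0_insert_of_not_rel G he fun h => ?_
  rw [isBridge_iff] at hb
  refine hb (eqvGen_le ?_ _ _ h)
  rintro x y ⟨f, hf, hends⟩
  refine EqvGen.rel _ _ ⟨f, ?_, hends⟩
  simp only [Finset.mem_insert, not_or] at hf
  simpa using hf.1

theorem b0_singleton_not_bridge {e : G.E} (hb : ¬ G.IsBridge e) :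
    G.b0Del {e} = G.b0Del ∅ := by
  have h1 : G.b0Del ∅ ≤ G.b0Del {e} := by
    have := G.b0_le_insert e ∅; simpa using this
  rw [IsBridge] at hb; omega

section Con
variable {G : Multigraph} {e : G.E} (hnl : (G.ends e).1 ≠ (G.ends e).2)

include hnl in
theorem rmap_ne_snd (v : G.V) : G.rmap e v ≠ (G.ends e).2 := by
  rw [rmap]; split
  · exact fun h => hnl h
  · assumption

include hnl in
theorem eqvGen_step_con (D : Finset (G.con e).E) (u v : G.V) :
    EqvGen (G.step (G.lifts e D)) u v ↔
      EqvGen (fun x y => (G.con e).step D x y ∨ (x = (G.ends e).1 ∧ y = (G.ends e).2)) u v := by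
  set S := fun x y => (G.con e).step D x y ∨ (x = (G.ends e).1 ∧ y = (G.ends e).2) with hSdef
  have hES := Relation.EqvGen.is_equivalence S
  have hER := Relation.EqvGen.is_equivalence (G.step (G.lifts e D))
  have hstepab : G.step (G.lifts e D) (G.ends e).1 (G.ends e).2 :=
    ⟨e, G.not_mem_lifts e D, Or.inl (Prod.ext rfl rfl)⟩
  have hw : ∀ w : G.V, EqvGen S w (G.rmap e w) := by
    intro w
    rw [rmap]
    split
    · subst ‹w = (G.ends e).2›
      exact hES.symm (EqvGen.rel _ _ (Or.inr ⟨rfl, rfl⟩))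
    · exact EqvGen.refl _
  have hw' : ∀ w : G.V, EqvGen (G.step (G.lifts e D)) w (G.rmap e w) := by
    intro w
    rw [rmap]
    split
    · subst ‹w = (G.ends e).2›
      exact hER.symm (EqvGen.rel _ _ hstepab)
    · exact EqvGen.refl _
  constructor
  · refine eqvGen_le ?_ u v
    rintro x y ⟨f, hf, hends⟩
    by_cases hfe : f = e
    · subst hfe
      rcases hends with h | h
      · have h1 : x = (G.ends f).1 := (congrArg Prod.fst h).symm
        have h2 : y = (G.ends f).2 := (congrArg Prod.snd h).symm
        exact EqvGen.rel _ _ (Or.inr ⟨h1, h2⟩)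
      · have h1 : y = (G.ends f).1 := (congrArg Prod.fst h).symm
        have h2 : x = (G.ends f).2 := (congrArg Prod.snd h).symm
        exact hES.symm (EqvGen.rel _ _ (Or.inr ⟨h1, h2⟩))
    · have hfD : (⟨f, hfe⟩ : (G.con e).E) ∉ D := by
        intro hm
        exact hf (G.mem_lifts.2 ⟨hfe, hm⟩)
      have hcs : (G.con e).step D (G.rmap e (G.ends f).1) (G.rmap e (G.ends f).2) :=
        ⟨⟨f, hfe⟩, hfD, Or.inl rfl⟩
      rcases hends with h | h
      · have h1 : (G.ends f).1 = x := congrArg Prod.fst h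
        have h2 : (G.ends f).2 = y := congrArg Prod.snd h
        rw [h1, h2] at hcs
        exact hES.trans (hw x) (hES.trans (EqvGen.rel _ _ (Or.inl hcs)) (hES.symm (hw y)))
      · have h1 : (G.ends f).1 = y := congrArg Prod.fst h
        have h2 : (G.ends f).2 = x := congrArg Prod.snd h
        rw [h1, h2] at hcs
        exact hES.symm
          (hES.trans (hw y) (hES.trans (EqvGen.rel _ _ (Or.inl hcs)) (hES.symm (hw x))))
  · refine eqvGen_le ?_ u v
    rintro x y (⟨f, hf, hends⟩ | ⟨rfl, rfl⟩)
    · have hfL : f.1 ∉ G.lifts e D := by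
        rw [G.mem_lifts]
        rintro ⟨h, hm⟩
        exact hf (by simpa using hm)
      have hxy : EqvGen (G.step (G.lifts e D)) (G.ends f.1).1 (G.ends f.1).2 :=
        EqvGen.rel _ _ ⟨f.1, hfL, Or.inl rfl⟩
      have hends' : (G.con e).ends f
          = (G.rmap e (G.ends f.1).1, G.rmap e (G.ends f.1).2) := rfl
      rw [hends'] at hends
      rcases hends with h | h
      · have h1 : G.rmap e (G.ends f.1).1 = x := congrArg Prod.fst h
        have h2 : G.rmap e (G.ends f.1).2 = y := congrArg Prod.snd h
        rw [← h1, ← h2]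
        exact hER.trans (hER.symm (hw' _)) (hER.trans hxy (hw' _))
      · have h1 : G.rmap e (G.ends f.1).1 = y := congrArg Prod.fst h
        have h2 : G.rmap e (G.ends f.1).2 = x := congrArg Prod.snd h
        rw [← h1, ← h2]
        exact hER.symm (hER.trans (hER.symm (hw' _)) (hER.trans hxy (hw' _)))
    · exact EqvGen.rel _ _ hstepab

include hnl in
theorem con_not_rel (D : Finset (G.con e).E) :
    ¬ EqvGen ((G.con e).step D) (G.ends e).1 (G.ends e).2 := by
  intro h
  have key : ∀ u v : G.V, EqvGen ((G.con e).step D) u v →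
      (u = (G.ends e).2 ↔ v = (G.ends e).2) := by
    intro u v huv
    induction huv with
    | rel x y hxy =>
      obtain ⟨f, hf, hends⟩ := hxy
      have hends' : (G.con e).ends f
          = (G.rmap e (G.ends f.1).1, G.rmap e (G.ends f.1).2) := rfl
      rw [hends'] at hends
      have h1 := rmap_ne_snd hnl (G.ends f.1).1
      have h2 := rmap_ne_snd hnl (G.ends f.1).2
      rcases hends with h | h <;>
        · rw [Prod.ext_iff] at h
          constructor <;> intro hh <;> exfalso <;> simp_all
    | refl x => rfl
    | symm x y _ ih => exact ih.symm
    | trans x y z _ _ ih1 ih2 => exact ih1.trans ih2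
  exact hnl ((key _ _ h).2 rfl)

include hnl in
theorem b0_con (D : Finset (G.con e).E) :
    (G.con e).b0Del D = G.b0Del (G.lifts e D) + 1 := by
  rw [b0Del_eq, b0Del_eq, ncomp_congr (eqvGen_step_con hnl D),
    ← ncomp_pair_of_not_rel (con_not_rel hnl D)]

end Con

theorem b0_of_no_step {G : Multigraph} {D : Finset G.E} (h : ∀ u v, ¬ G.step D u v) :
    G.b0Del D = Fintype.card G.V := by
  rw [b0Del_eq]
  have hkey : ∀ u v : G.V, EqvGen (G.step D) u v → u = v := by
    intro u v huv
    induction huv with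
    | rel x y hxy => exact absurd hxy (h x y)
    | refl x => rfl
    | symm x y _ ih => exact ih.symm
    | trans x y z _ _ ih1 ih2 => exact ih1.trans ih2
  have : Function.Bijective (Quotient.mk (nsetoid (G.step D))) := by
    constructor
    · intro u v huv
      exact hkey u v (Quotient.exact huv)
    · intro q
      obtain ⟨v, rfl⟩ := Quotient.exists_rep q
      exact ⟨v, rfl⟩
  rw [ncomp, ← Nat.card_congr (Equiv.ofBijective _ this), Nat.card_eq_fintype_card]

theorem b0_ge (G : Multigraph) (D : Finset G.E) :
    Fintype.card G.V ≤ (Fintype.card G.E - D.card) + G.b0Del D := by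
  generalize hk : Fintype.card G.E - D.card = k
  induction k generalizing D with
  | zero =>
    have hcard : D.card = Fintype.card G.E := by
      have := Finset.card_le_univ D; omega
    have hD : D = Finset.univ := Finset.eq_univ_of_card D hcard
    subst hD
    rw [b0_of_no_step (fun u v h => by obtain ⟨f, hf, -⟩ := h; exact hf (Finset.mem_univ f))]
    omega
  | succ k ih =>
    have hne : D ≠ Finset.univ := by
      intro h
      rw [h, Finset.card_univ] at hk
      omega
    obtain ⟨f, hf⟩ : ∃ f, f ∉ D := by
      by_contra hall
      push_neg at hall
      exact hne (Finset.eq_univ_iff_forall.2 hall)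
    have hk' : Fintype.card G.E - (insert f D).card = k := by
      rw [Finset.card_insert_of_notMem hf]
      omega
    have hle := ih (insert f D) hk'
    have hb0 := G.b0_insert_le f D
    omega

theorem b1_nonneg (G : Multigraph) (D : Finset G.E) : 0 ≤ G.b1Del D := by
  have h := b0_ge G D
  rw [b1Del]
  have hc : D.card ≤ Fintype.card G.E := Finset.card_le_univ D
  omega

theorem card_con_V (G : Multigraph) (e : G.E) : Fintype.card (G.con e).V = Fintype.card G.V := rfl
theorem card_del_V (G : Multigraph) (e : G.E) : Fintype.card (G.del e).V = Fintype.card G.V := rfl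

theorem b1_del (G : Multigraph) (e : G.E) (D : Finset {f : G.E // f ≠ e}) :
    (G.del e).b1Del D = G.b1Del (insert e (G.lifts e D)) := by
  have hE : Fintype.card (G.del e).E + 1 = Fintype.card G.E := G.card_E_del e
  have hb0 : (G.del e).b0Del D = G.b0Del (insert e (G.lifts e D)) := G.b0_del e D
  have hcard : (insert e (G.lifts e D)).card = D.card + 1 := by
    rw [Finset.card_insert_of_notMem (G.not_mem_lifts e D), G.card_lifts e D]
  have hDle : D.card ≤ Fintype.card (G.del e).E := Finset.card_le_univ D
  have hDle2 : (insert e (G.lifts e D)).card ≤ Fintype.card G.E :=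
    Finset.card_le_univ _
  rw [b1Del, b1Del, hb0, hcard, card_del_V]
  rw [hcard] at hDle2
  omega

theorem b1_con (G : Multigraph) {e : G.E} (hnl : (G.ends e).1 ≠ (G.ends e).2)
    (D : Finset {f : G.E // f ≠ e}) :
    (G.con e).b1Del D = G.b1Del (G.lifts e D) := by
  have hE : Fintype.card (G.con e).E + 1 = Fintype.card G.E := G.card_E_del e
  have hb0 : (G.con e).b0Del D = G.b0Del (G.lifts e D) + 1 := b0_con hnl D
  have hcard : (G.lifts e D).card = D.card := G.card_lifts e D
  have hDle : D.card ≤ Fintype.card (G.con e).E := Finset.card_le_univ D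
  rw [b1Del, b1Del, hb0, hcard, card_con_V]
  omega

theorem b1_loop (G : Multigraph) {e : G.E} (hl : (G.ends e).1 = (G.ends e).2)
    (D : Finset {f : G.E // f ≠ e}) :
    G.b1Del (G.lifts e D) = (G.del e).b1Del D + 1 := by
  have hE : Fintype.card (G.del e).E + 1 = Fintype.card G.E := G.card_E_del e
  have hb0 : (G.del e).b0Del D = G.b0Del (insert e (G.lifts e D)) := G.b0_del e D
  have hb0' : G.b0Del (insert e (G.lifts e D)) = G.b0Del (G.lifts e D) :=
    G.b0_insert_loop hl _
  have hcard : (G.lifts e D).card = D.card := G.card_lifts e D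
  have hDle : D.card ≤ Fintype.card (G.del e).E := Finset.card_le_univ D
  rw [b1Del, b1Del, hb0, hb0', hcard, card_del_V]
  omega

theorem b1_bridge (G : Multigraph) {e : G.E} (hb : G.IsBridge e)
    (D : Finset {f : G.E // f ≠ e}) :
    G.b1Del (insert e (G.lifts e D)) = G.b1Del (G.lifts e D) := by
  have hb0 : G.b0Del (insert e (G.lifts e D)) = G.b0Del (G.lifts e D) + 1 :=
    G.b0_insert_bridge hb (G.not_mem_lifts e D)
  have hcard : (insert e (G.lifts e D)).card = D.card + 1 := by
    rw [Finset.card_insert_of_notMem (G.not_mem_lifts e D), G.card_lifts e D]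
  have hDle2 : (insert e (G.lifts e D)).card ≤ Fintype.card G.E := Finset.card_le_univ _
  rw [b1Del, b1Del, hb0, hcard, G.card_lifts e D]
  rw [hcard] at hDle2
  omega

theorem b1_not_bridge_singleton (G : Multigraph) {e : G.E} (hb : ¬ G.IsBridge e) :
    G.b1Del {e} + 1 = G.b1Del ∅ := by
  have hb0 : G.b0Del {e} = G.b0Del ∅ := G.b0_singleton_not_bridge hb
  have h1 : (1 : ℕ) ≤ Fintype.card G.E := by
    by_contra h
    have : Fintype.card G.E = 0 := by omega
    have : IsEmpty G.E := Fintype.card_eq_zero_iff.1 this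
    exact this.elim e
  rw [b1Del, b1Del, hb0]
  simp only [Finset.card_singleton, Finset.card_empty]
  omega

theorem sum_erase_powerset (G : Multigraph) (e : G.E) {M : Type} [AddCommMonoid M]
    (g : Finset G.E → M) :
    ∑ t ∈ (Finset.univ.erase e).powerset, g t
    = ∑ D : Finset {f : G.E // f ≠ e}, g (G.lifts e D) := by
  refine Finset.sum_bij' (fun t _ => Finset.subtype (· ≠ e) t)
    (fun D _ => G.lifts e D) ?_ ?_ ?_ ?_ ?_
  · intro t ht
    exact Finset.mem_univ _
  · intro D hD
    rw [Finset.mem_powerset]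
    intro f hf
    rw [Multigraph.mem_lifts] at hf
    exact Finset.mem_erase.2 ⟨hf.1, Finset.mem_univ f⟩
  · intro t ht
    rw [Finset.mem_powerset] at ht
    ext f
    simp only [Multigraph.mem_lifts, Finset.mem_subtype]
    constructor
    · rintro ⟨h, hm⟩; simpa using hm
    · intro hm
      exact ⟨(Finset.mem_erase.1 (ht hm)).1, by simpa using hm⟩
  · intro D hD
    ext f
    simp [Finset.mem_subtype, Multigraph.mem_lifts, f.2]
  · intro t ht
    rw [Finset.mem_powerset] at ht
    congr 1
    ext f
    simp only [Multigraph.mem_lifts, Finset.mem_subtype]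
    constructor
    · intro hm
      exact ⟨(Finset.mem_erase.1 (ht hm)).1, by simpa using hm⟩
    · rintro ⟨h, hm⟩; simpa using hm

theorem sum_split (G : Multigraph) (e : G.E) {M : Type} [AddCommMonoid M]
    (g : Finset G.E → M) :
    ∑ D : Finset G.E, g D
      = ∑ D : Finset {f : G.E // f ≠ e},
          (g (G.lifts e D) + g (insert e (G.lifts e D))) := by
  have h1 : ∑ D : Finset G.E, g D = ∑ t ∈ (Finset.univ : Finset G.E).powerset, g t := by
    rw [Finset.powerset_univ]
  rw [h1, ← Finset.insert_erase (Finset.mem_univ e),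
    Finset.sum_powerset_insert (Finset.notMem_erase e _),
    sum_erase_powerset G e g, sum_erase_powerset G e (fun t => g (insert e t)),
    ← Finset.sum_add_distrib]

theorem lifts_singleton (G : Multigraph) (e : G.E) (f : {f : G.E // f ≠ e}) :
    G.lifts e {f} = {f.1} := Finset.map_singleton _ _

theorem FPoly_del_eq (G : Multigraph) (e : G.E) :
    (G.del e).FPoly = ∑ D : Finset {f : G.E // f ≠ e},
      (-1 : Polynomial ℚ) ^ D.card * X ^ (((G.del e).b1Del D).toNat) := rfl

theorem FPoly_con_eq (G : Multigraph) (e : G.E) :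
    (G.con e).FPoly = ∑ D : Finset {f : G.E // f ≠ e},
      (-1 : Polynomial ℚ) ^ D.card * X ^ (((G.con e).b1Del D).toNat) := rfl

theorem FPoly_loop (G : Multigraph) {e : G.E} (hl : (G.ends e).1 = (G.ends e).2) :
    G.FPoly = (X - 1) * (G.del e).FPoly := by
  rw [FPoly, sum_split G e, FPoly_del_eq G e, Finset.mul_sum]
  refine Finset.sum_congr rfl fun D _ => ?_
  have hb1 : G.b1Del (G.lifts e D) = (G.del e).b1Del D + 1 := G.b1_loop hl D
  have hb2 : G.b1Del (insert e (G.lifts e D)) = (G.del e).b1Del D := (G.b1_del e D).symm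
  have hnn : 0 ≤ (G.del e).b1Del D := b1_nonneg (G.del e) D
  have ht1 : (G.b1Del (G.lifts e D)).toNat = ((G.del e).b1Del D).toNat + 1 := by omega
  have ht2 : (G.b1Del (insert e (G.lifts e D))).toNat = ((G.del e).b1Del D).toNat := by omega
  have hc1 : (G.lifts e D).card = D.card := G.card_lifts e D
  have hc2 : (insert e (G.lifts e D)).card = D.card + 1 := by
    rw [Finset.card_insert_of_notMem (G.not_mem_lifts e D), hc1]
  rw [ht1, ht2, hc1, hc2]
  generalize ((G.del e).b1Del D).toNat = k
  generalize D.card = c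
  ring

theorem FPoly_del_con (G : Multigraph) {e : G.E} (hnl : (G.ends e).1 ≠ (G.ends e).2) :
    G.FPoly = (G.con e).FPoly - (G.del e).FPoly := by
  rw [FPoly, sum_split G e, FPoly_del_eq G e, FPoly_con_eq G e, ← Finset.sum_sub_distrib]
  refine Finset.sum_congr rfl fun D _ => ?_
  have hb1 : (G.b1Del (G.lifts e D)).toNat = (((G.con e).b1Del D).toNat) := by
    rw [G.b1_con hnl D]
  have hb2 : (G.b1Del (insert e (G.lifts e D))).toNat = (((G.del e).b1Del D).toNat) := by
    rw [G.b1_del e D]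
  have hc1 : (G.lifts e D).card = D.card := G.card_lifts e D
  have hc2 : (insert e (G.lifts e D)).card = D.card + 1 := by
    rw [Finset.card_insert_of_notMem (G.not_mem_lifts e D), hc1]
  rw [hb1, hb2, hc1, hc2]
  generalize ((G.con e).b1Del D).toNat = k1
  generalize ((G.del e).b1Del D).toNat = k2
  generalize D.card = c
  ring

theorem FPoly_bridge (G : Multigraph) {e : G.E} (hnl : (G.ends e).1 ≠ (G.ends e).2)
    (hb : G.IsBridge e) : (G.con e).FPoly = (G.del e).FPoly := by
  rw [FPoly_del_eq G e, FPoly_con_eq G e]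
  refine Finset.sum_congr rfl fun D _ => ?_
  have hb1 : (G.con e).b1Del D = G.b1Del (G.lifts e D) := G.b1_con hnl D
  have hb2 : (G.del e).b1Del D = G.b1Del (insert e (G.lifts e D)) := G.b1_del e D
  have hb3 : G.b1Del (insert e (G.lifts e D)) = G.b1Del (G.lifts e D) := G.b1_bridge hb D
  rw [hb1, hb2, hb3]

/-- The renormalized flow polynomial. -/
def fP (G : Multigraph) : Polynomial ℚ :=
  (-1 : Polynomial ℚ) ^ (G.b1Del ∅).toNat * G.FPoly.comp (1 - X)

theorem insert_empty (G : Multigraph) (e : G.E) : insert e (∅ : Finset G.E) = {e} := rfl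

theorem fP_loop (G : Multigraph) {e : G.E} (hl : (G.ends e).1 = (G.ends e).2) :
    G.fP = X * (G.del e).fP := by
  have hb1 : G.b1Del ∅ = (G.del e).b1Del ∅ + 1 := by
    have h := G.b1_loop hl ∅
    rwa [lifts_empty] at h
  have hnn : 0 ≤ (G.del e).b1Del ∅ := b1_nonneg (G.del e) ∅
  have ht : (G.b1Del ∅).toNat = ((G.del e).b1Del ∅).toNat + 1 := by omega
  rw [fP, FPoly_loop G hl, mul_comp, sub_comp, X_comp, one_comp, fP, ht]
  generalize ((G.del e).b1Del ∅).toNat = k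
  generalize (G.del e).FPoly.comp (1 - X) = P
  ring

theorem fP_con_del (G : Multigraph) {e : G.E} (hnl : (G.ends e).1 ≠ (G.ends e).2)
    (hnb : ¬ G.IsBridge e) : G.fP = (G.con e).fP + (G.del e).fP := by
  have hb1 : (G.con e).b1Del ∅ = G.b1Del ∅ := by
    have h := G.b1_con hnl ∅
    rwa [lifts_empty] at h
  have hb2 : (G.del e).b1Del ∅ + 1 = G.b1Del ∅ := by
    have h1 : (G.del e).b1Del ∅ = G.b1Del {e} := by
      have h := G.b1_del e ∅
      rwa [lifts_empty, insert_empty] at h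
    rw [h1]
    exact G.b1_not_bridge_singleton hnb
  have hnn : 0 ≤ (G.del e).b1Del ∅ := b1_nonneg (G.del e) ∅
  have ht : (G.b1Del ∅).toNat = ((G.del e).b1Del ∅).toNat + 1 := by omega
  have htc : ((G.con e).b1Del ∅).toNat = ((G.del e).b1Del ∅).toNat + 1 := by omega
  rw [fP, FPoly_del_con G hnl, sub_comp, fP, fP, ht, htc]
  generalize ((G.del e).b1Del ∅).toNat = k
  generalize (G.del e).FPoly.comp (1 - X) = P
  generalize (G.con e).FPoly.comp (1 - X) = Q
  ring

theorem fP_bridge (G : Multigraph) {e : G.E} (hnl : (G.ends e).1 ≠ (G.ends e).2)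
    (hb : G.IsBridge e) : G.fP = 0 := by
  rw [fP, FPoly_del_con G hnl, FPoly_bridge G hnl hb, sub_self, zero_comp, mul_zero]

theorem not_bridge_del_loop (G : Multigraph) {e : G.E} (hl : (G.ends e).1 = (G.ends e).2)
    (hbl : ∀ f, ¬ G.IsBridge f) : ∀ f, ¬ (G.del e).IsBridge f := by
  intro f hb
  rw [IsBridge] at hb
  have h1 : (G.del e).b0Del ∅ = G.b0Del ∅ := by
    have h := G.b0_del e ∅
    rw [lifts_empty, insert_empty] at h
    rw [h, show ({e} : Finset G.E) = insert e ∅ from rfl, G.b0_insert_loop hl]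
  have h2 : (G.del e).b0Del {f} = G.b0Del ∅ := by
    have h3 := G.b0_del e {f}
    rw [lifts_singleton] at h3
    rw [h3, G.b0_insert_loop hl ({f.1} : Finset G.E),
      G.b0_singleton_not_bridge (hbl f.1)]
  rw [h1, h2] at hb
  omega

theorem not_bridge_con (G : Multigraph) {e : G.E} (hnl : (G.ends e).1 ≠ (G.ends e).2)
    (hbl : ∀ f, ¬ G.IsBridge f) : ∀ f, ¬ (G.con e).IsBridge f := by
  intro f hb
  rw [IsBridge] at hb
  have h1 : (G.con e).b0Del ∅ = G.b0Del ∅ + 1 := by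
    have h := b0_con hnl (∅ : Finset (G.con e).E)
    rwa [lifts_empty] at h
  have h2 : (G.con e).b0Del {f} = G.b0Del ∅ + 1 := by
    have h := b0_con hnl ({f} : Finset (G.con e).E)
    rw [lifts_singleton] at h
    rw [h, G.b0_singleton_not_bridge (hbl f.1)]
  rw [h1, h2] at hb
  omega

theorem b1_empty_of_isEmpty (G : Multigraph) (h : IsEmpty G.E) : G.b1Del ∅ = 0 := by
  have hb0 : G.b0Del ∅ = Fintype.card G.V :=
    b0_of_no_step (fun u v hs => by obtain ⟨f, -, -⟩ := hs; exact h.elim f)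
  have hE : Fintype.card G.E = 0 := Fintype.card_eq_zero
  rw [b1Del, hb0, hE]
  simp

theorem fP_of_isEmpty (G : Multigraph) (h : IsEmpty G.E) : G.fP = 1 := by
  have huniv : (Finset.univ : Finset (Finset G.E)) = {∅} := by
    ext D
    simp only [Finset.mem_univ, Finset.mem_singleton, true_iff]
    exact Finset.eq_empty_of_isEmpty D
  have hF : G.FPoly = 1 := by
    rw [FPoly, huniv, Finset.sum_singleton, b1_empty_of_isEmpty G h]
    simp
  rw [fP, hF, one_comp, b1_empty_of_isEmpty G h]
  simp

theorem key : ∀ (n : ℕ) (G : Multigraph), Fintype.card G.E = n →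
    (∀ i, ∃ m : ℕ, (G.fP).coeff i = (m : ℚ)) ∧
    (G.fP).natDegree ≤ (G.b1Del ∅).toNat ∧
    ((∀ e, ¬ G.IsBridge e) → (G.fP).coeff (G.b1Del ∅).toNat ≠ 0) := by
  intro n
  induction n using Nat.strong_induction_on with
  | _ n ih =>
    intro G hn
    by_cases hE : IsEmpty G.E
    · have h1 : G.fP = 1 := fP_of_isEmpty G hE
      have h0 : (G.b1Del ∅).toNat = 0 := by rw [b1_empty_of_isEmpty G hE]; rfl
      refine ⟨fun i => ⟨if i = 0 then 1 else 0, ?_⟩, ?_, fun _ => ?_⟩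
      · rw [h1, Polynomial.coeff_one]
        split <;> simp
      · rw [h1, Polynomial.natDegree_one]
        omega
      · rw [h1, h0, Polynomial.coeff_one]
        simp
    · obtain ⟨e⟩ := not_isEmpty_iff.1 hE
      have hcardd : Fintype.card (G.del e).E + 1 = Fintype.card G.E := G.card_E_del e
      have hcardc : Fintype.card (G.con e).E + 1 = Fintype.card G.E := G.card_E_del e
      have hpos : 1 ≤ n := by
        rw [← hn]
        have : 0 < Fintype.card G.E := Fintype.card_pos_iff.2 ⟨e⟩
        omega
      have hltd : Fintype.card (G.del e).E < n := by omega
      have hltc : Fintype.card (G.con e).E < n := by omega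
      by_cases hl : (G.ends e).1 = (G.ends e).2
      · -- loop case
        obtain ⟨ih1, ih2, ih3⟩ := ih _ hltd (G.del e) rfl
        have heq : G.fP = X * (G.del e).fP := fP_loop G hl
        have hb1 : G.b1Del ∅ = (G.del e).b1Del ∅ + 1 := by
          have h := G.b1_loop hl ∅
          rwa [lifts_empty] at h
        have hnn : 0 ≤ (G.del e).b1Del ∅ := b1_nonneg (G.del e) ∅
        have ht : (G.b1Del ∅).toNat = ((G.del e).b1Del ∅).toNat + 1 := by omega
        refine ⟨fun i => ?_, ?_, fun hbl => ?_⟩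
        · match i with
          | 0 => exact ⟨0, by rw [heq, mul_comm, Polynomial.coeff_mul_X_zero]; rfl⟩
          | i + 1 =>
            obtain ⟨m, hm⟩ := ih1 i
            exact ⟨m, by rw [heq, Polynomial.coeff_X_mul]; exact hm⟩
        · rw [heq]
          refine le_trans (Polynomial.natDegree_mul_le) ?_
          rw [Polynomial.natDegree_X]
          omega
        · rw [heq, ht, Polynomial.coeff_X_mul]
          exact ih3 (not_bridge_del_loop G hl hbl)
      · by_cases hbr : G.IsBridge e
        · have heq : G.fP = 0 := fP_bridge G hl hbr
          refine ⟨fun i => ⟨0, by rw [heq]; simp⟩, ?_, fun hbl => absurd hbr (hbl e)⟩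
          rw [heq, Polynomial.natDegree_zero]
          omega
        · obtain ⟨ihc1, ihc2, ihc3⟩ := ih _ hltc (G.con e) rfl
          obtain ⟨ihd1, ihd2, ihd3⟩ := ih _ hltd (G.del e) rfl
          have heq : G.fP = (G.con e).fP + (G.del e).fP := fP_con_del G hl hbr
          have hb1 : (G.con e).b1Del ∅ = G.b1Del ∅ := by
            have h := G.b1_con hl ∅
            rwa [lifts_empty] at h
          have hb2 : (G.del e).b1Del ∅ + 1 = G.b1Del ∅ := by
            have h1 : (G.del e).b1Del ∅ = G.b1Del {e} := by
              have h := G.b1_del e ∅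
              rwa [lifts_empty, insert_empty] at h
            rw [h1]
            exact G.b1_not_bridge_singleton hbr
          have hnn : 0 ≤ (G.del e).b1Del ∅ := b1_nonneg (G.del e) ∅
          have htc : ((G.con e).b1Del ∅).toNat = (G.b1Del ∅).toNat := by omega
          have htd : ((G.del e).b1Del ∅).toNat + 1 = (G.b1Del ∅).toNat := by omega
          refine ⟨fun i => ?_, ?_, fun hbl => ?_⟩
          · obtain ⟨m1, hm1⟩ := ihc1 i
            obtain ⟨m2, hm2⟩ := ihd1 i
            refine ⟨m1 + m2, ?_⟩
            rw [heq, Polynomial.coeff_add, hm1, hm2]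
            push_cast
            ring
          · rw [heq]
            refine le_trans (Polynomial.natDegree_add_le _ _) (max_le ?_ ?_)
            · omega
            · omega
          · have hzero : ((G.del e).fP).coeff (G.b1Del ∅).toNat = 0 := by
              refine Polynomial.coeff_eq_zero_of_natDegree_lt ?_
              omega
            rw [heq, Polynomial.coeff_add, hzero, add_zero, ← htc]
            exact ihc3 (not_bridge_con G hl hbl)

end Multigraph

/-- The flow polynomial of a graph with at least one edge vanishes at `Q = 1`;
more generally, for a bridgeless graph `G`, the renormalization
`f_G(x) = (−1)^{b₁(G)} F_G(1−x)` is a polynomial of degree `b₁(G)` with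
nonnegative integer coefficients. -/
theorem stmt7 (G : Multigraph) :
    (Nonempty G.E → G.FPoly.eval 1 = 0) ∧
    ((∀ e, ¬ G.IsBridge e) →
      ((-1 : Polynomial ℚ) ^ (G.b1Del ∅).toNat * G.FPoly.comp (1 - Polynomial.X)).natDegree
          = (G.b1Del ∅).toNat ∧
      ∀ n : ℕ, ∃ m : ℕ,
        ((-1 : Polynomial ℚ) ^ (G.b1Del ∅).toNat * G.FPoly.comp (1 - Polynomial.X)).coeff n
          = (m : ℚ)) := by
  obtain ⟨hP1, hP2, hP3⟩ := Multigraph.key (Fintype.card G.E) G rfl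
  constructor
  · intro hne
    haveI : Nonempty G.E := hne
    rw [Multigraph.FPoly, Polynomial.eval_finset_sum]
    have hterm : ∀ D : Finset G.E,
        ((-1 : Polynomial ℚ) ^ D.card * X ^ (G.b1Del D).toNat).eval 1 = (-1 : ℚ) ^ D.card := by
      intro D
      simp
    rw [Finset.sum_congr rfl fun D _ => hterm D]
    have h1 := Finset.sum_powerset_neg_one_pow_card_of_nonempty
      (Finset.univ_nonempty (α := G.E))
    have h2 : ∑ D ∈ (Finset.univ : Finset G.E).powerset, (-1 : ℚ) ^ D.card = 0 := by
      exact_mod_cast congrArg (fun z : ℤ => (z : ℚ)) h1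
    rw [Finset.powerset_univ] at h2
    exact h2
  · intro hbl
    exact ⟨le_antisymm hP2 (Polynomial.le_natDegree_of_ne_zero (hP3 hbl)), hP1⟩
end
end
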